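/- arXiv:2007.06852 — 6 statements merged into one kernel-verified Lean document; each statement's English description precedes it below -/
import Mathlib

section
/- Assume additionally that Ψ and g are differentiable, and let β, γ > 0. Let η be an everywhere positive, continuously differentiable probability density on ℝ^d such that Ψ is Bochner integrable with respect to η(θ)dθ, let Z₁ := ∫_{ℝ^d} exp(−β|r|²/2) dr, and define ρ(θ,r) := (exp(−β|r|²/2)/Z₁)·η(θ). Suppose ρ satisfies the stationary kinetic Fokker–Planck equation pointwise: for all (θ,r), ⟨∇_θρ(θ,r), r⟩ − ∇_r·[ρ(θ,r)(∇F'(η)(θ) + γ r)] − γβ⁻¹Δ_rρ(θ,r) = 0, where Δ_r is the Laplacian in r. Then ∇η(θ) + β η(θ) ∇F'(η)(θ) = 0 for every θ; consequently exp(−βF'(η)) is Lebesgue integrable and η(θ) = exp(−βF'(η)(θ))/Z₂(η) for every θ, where Z₂(η) := ∫ exp(−βF'(η)(θ)) dθ. (Second part of Theorem 4.1: the θ-marginal of a stationary solution solves the Boltzmann fixed point equation.) -/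
open MeasureTheory
open scoped RealInnerProductSpace

/-- Divergence of a vector field on `ℝ^d`: the trace of its Fréchet derivative. -/
noncomputable def vdiv {d : ℕ}
    (v : EuclideanSpace ℝ (Fin d) → EuclideanSpace ℝ (Fin d))
    (x : EuclideanSpace ℝ (Fin d)) : ℝ :=
  LinearMap.trace ℝ (EuclideanSpace ℝ (Fin d)) (fderiv ℝ v x)

section helpers
variable {d : ℕ}
local notation "E" => EuclideanSpace ℝ (Fin d)

lemma traceSmulRight (φ : E →L[ℝ] ℝ) (v : E) :
    LinearMap.trace ℝ E ((ContinuousLinearMap.smulRight φ v : E →L[ℝ] E) : E →ₗ[ℝ] E) = φ v := by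
  have h1 : ((ContinuousLinearMap.smulRight φ v : E →L[ℝ] E) : E →ₗ[ℝ] E)
      = (LinearMap.toSpanSingleton ℝ E v) ∘ₗ (φ : E →ₗ[ℝ] ℝ) := by
    ext w
    simp [LinearMap.toSpanSingleton_apply]
  have h2 : (φ : E →ₗ[ℝ] ℝ) ∘ₗ (LinearMap.toSpanSingleton ℝ E v) = φ v • LinearMap.id := by
    ext c
    simp [LinearMap.toSpanSingleton_apply, smul_eq_mul, mul_comm]
  rw [h1, LinearMap.trace_comp_comm', h2, _root_.map_smul, LinearMap.trace_id, smul_eq_mul,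
    Module.finrank_self]
  simp

lemma hasFDerivAt_gauss (β a : ℝ) (r : E) :
    HasFDerivAt (fun r' : E => a * Real.exp (-β * ‖r'‖ ^ 2 / 2))
      ((-β * (a * Real.exp (-β * ‖r‖ ^ 2 / 2))) • (innerSL ℝ r)) r := by
  have h1 : HasFDerivAt (fun r' : E => ‖r'‖ ^ 2) (2 • (innerSL ℝ r)) r :=
    (hasStrictFDerivAt_norm_sq r).hasFDerivAt
  have h2 := ((h1.const_mul (-β / 2)).exp).const_mul a
  have hfun : (fun r' : E => a * Real.exp (-β / 2 * ‖r'‖ ^ 2))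
      = fun r' : E => a * Real.exp (-β * ‖r'‖ ^ 2 / 2) := by
    funext r'
    ring_nf
  rw [hfun] at h2
  refine h2.congr_fderiv ?_
  ext w
  have : -β * ‖r‖ ^ 2 / 2 = -β / 2 * ‖r‖ ^ 2 := by ring
  simp [this, smul_smul]
  ring

lemma vdiv_gauss (β a γ : ℝ) (v r : E) :
    vdiv (fun r' : E => (a * Real.exp (-β * ‖r'‖ ^ 2 / 2)) • (v + γ • r')) r
      = (a * Real.exp (-β * ‖r‖ ^ 2 / 2)) * (γ * d)
        + (-β * (a * Real.exp (-β * ‖r‖ ^ 2 / 2))) * ⟪r, v + γ • r⟫ := by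
  have hlin : HasFDerivAt (fun r' : E => v + γ • r') (γ • ContinuousLinearMap.id ℝ E) r :=
    ((hasFDerivAt_id r).const_smul γ).const_add v
  have hf : HasFDerivAt (fun r' : E => (a * Real.exp (-β * ‖r'‖ ^ 2 / 2)) • (v + γ • r')) _ r :=
    (hasFDerivAt_gauss β a r).smul hlin
  rw [vdiv, hf.fderiv, ContinuousLinearMap.coe_add, map_add, traceSmulRight]
  congr 1
  · have : (((a * Real.exp (-β * ‖r‖ ^ 2 / 2)) • (γ • ContinuousLinearMap.id ℝ E) :
        E →L[ℝ] E) : E →ₗ[ℝ] E)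
        = ((a * Real.exp (-β * ‖r‖ ^ 2 / 2)) * γ) • LinearMap.id := by
      ext w
      simp [smul_smul]
    rw [this, _root_.map_smul, LinearMap.trace_id, finrank_euclideanSpace_fin, smul_eq_mul]
    ring

lemma hasGradientAt_of_innerSL {f : E → ℝ} {v x : E}
    (h : HasFDerivAt f (innerSL ℝ v) x) : HasGradientAt f v x := by
  rw [hasGradientAt_iff_hasFDerivAt]
  have hd : (InnerProductSpace.toDual ℝ E) v = innerSL ℝ v := by
    ext w
    simp [InnerProductSpace.toDual_apply_apply]
  rw [hd]
  exact h

lemma HasGradientAt.const_mul'' {f : E → ℝ} {v x : E} (a : ℝ) (h : HasGradientAt f v x) :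
    HasGradientAt (fun y => a * f y) (a • v) x := by
  rw [hasGradientAt_iff_hasFDerivAt] at h ⊢
  have hd : (InnerProductSpace.toDual ℝ E) (a • v) = a • (InnerProductSpace.toDual ℝ E) v := by
    ext w
    simp [InnerProductSpace.toDual_apply_apply, real_inner_smul_left]
  rw [hd]
  exact h.const_mul a

end helpers

/-- second part of Theorem 4.1: if `η` is an everywhere positive C¹
probability density on `ℝ^d` such that the product density
`ρ(θ,r) = (exp(−β|r|²/2)/Z₁) η(θ)` satisfies the stationary kinetic Fokker–Planck
equation `⟨∇_θρ, r⟩ − ∇_r·[ρ(∇F'(η)(θ) + γr)] − γβ⁻¹ Δ_r ρ = 0` pointwise, then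
`∇η + βη∇F'(η) = 0` everywhere; consequently `exp(−βF'(η))` is integrable and `η`
solves the Boltzmann fixed point equation `η = exp(−βF'(η))/Z₂(η)`.
Here `F'(η)(θ) = ⟨∇R(⟨Ψ,η⟩), Ψ(θ)⟩_ℱ + g(θ)`. -/
theorem stmt_1 {d : ℕ} {F : Type*} [NormedAddCommGroup F] [InnerProductSpace ℝ F]
    [CompleteSpace F]
    (R : F → ℝ) (hR0 : ∀ ψ, 0 ≤ R ψ) (hRconv : ConvexOn ℝ Set.univ R)
    (gradR : F → F) (hgradR : ∀ ψ, HasGradientAt R (gradR ψ) ψ)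
    (Ψ : EuclideanSpace ℝ (Fin d) → F) (hΨ : Differentiable ℝ Ψ)
    (g : EuclideanSpace ℝ (Fin d) → ℝ) (hg0 : ∀ θ, 0 ≤ g θ) (hg : Differentiable ℝ g)
    (β γ : ℝ) (hβ : 0 < β) (hγ : 0 < γ)
    (η : EuclideanSpace ℝ (Fin d) → ℝ)
    (hηpos : ∀ θ, 0 < η θ) (hηC1 : ContDiff ℝ 1 η) (hηint : ∫ θ, η θ = 1)
    (hΨη : Integrable fun θ => η θ • Ψ θ) :
    let Fp : EuclideanSpace ℝ (Fin d) → ℝ :=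
      fun θ => ⟪gradR (∫ θ', η θ' • Ψ θ'), Ψ θ⟫ + g θ
    let Z₁ : ℝ := ∫ r : EuclideanSpace ℝ (Fin d), Real.exp (-β * ‖r‖ ^ 2 / 2)
    let ρ : EuclideanSpace ℝ (Fin d) × EuclideanSpace ℝ (Fin d) → ℝ :=
      fun p => (Real.exp (-β * ‖p.2‖ ^ 2 / 2) / Z₁) * η p.1
    (∀ θ r : EuclideanSpace ℝ (Fin d),
        ⟪gradient (fun θ' => ρ (θ', r)) θ, r⟫
          - vdiv (fun r' => ρ (θ, r') • (gradient Fp θ + γ • r')) r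
          - (γ * β⁻¹) * vdiv (fun r' => gradient (fun r'' => ρ (θ, r'')) r') r = 0) →
      (∀ θ, gradient η θ + (β * η θ) • gradient Fp θ = 0) ∧
      (Integrable fun θ => Real.exp (-β * Fp θ)) ∧
      (∀ θ, η θ = Real.exp (-β * Fp θ) / ∫ θ', Real.exp (-β * Fp θ')) := by
  intro Fp Z₁ ρ hPDE
  have hηd : Differentiable ℝ η := hηC1.differentiable one_ne_zero
  have hZ1 : Z₁ = (Real.pi / (β / 2)) ^
      ((Module.finrank ℝ (EuclideanSpace ℝ (Fin d)) : ℝ) / 2) := by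
    rw [← GaussianFourier.integral_rexp_neg_mul_sq_norm
      (V := EuclideanSpace ℝ (Fin d)) (by positivity : (0:ℝ) < β / 2)]
    show (∫ r : EuclideanSpace ℝ (Fin d), Real.exp (-β * ‖r‖ ^ 2 / 2)) = _
    congr 1
    funext r
    congr 1
    ring
  have hZpos : 0 < Z₁ := by
    rw [hZ1]
    positivity
  -- Part 1
  have part1 : ∀ θ, gradient η θ + (β * η θ) • gradient Fp θ = 0 := by
    intro θ
    have key : ∀ r : EuclideanSpace ℝ (Fin d),
        ⟪gradient η θ + (β * η θ) • gradient Fp θ, r⟫ = 0 := by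
      intro r
      have h : ⟪gradient (fun θ' => (Real.exp (-β * ‖r‖ ^ 2 / 2) / Z₁) * η θ') θ, r⟫
          - vdiv (fun r' => ((Real.exp (-β * ‖r'‖ ^ 2 / 2) / Z₁) * η θ) •
              (gradient Fp θ + γ • r')) r
          - (γ * β⁻¹) * vdiv (fun r' =>
              gradient (fun r'' => (Real.exp (-β * ‖r''‖ ^ 2 / 2) / Z₁) * η θ) r') r = 0 :=
        hPDE θ r
      -- term 1
      have h1 : gradient (fun θ' => (Real.exp (-β * ‖r‖ ^ 2 / 2) / Z₁) * η θ') θ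
          = (Real.exp (-β * ‖r‖ ^ 2 / 2) / Z₁) • gradient η θ :=
        (HasGradientAt.const_mul'' _ (hηd θ).hasGradientAt).gradient
      -- term 2
      have h2f : (fun r' : EuclideanSpace ℝ (Fin d) =>
            ((Real.exp (-β * ‖r'‖ ^ 2 / 2) / Z₁) * η θ) • (gradient Fp θ + γ • r'))
          = fun r' => ((η θ / Z₁) * Real.exp (-β * ‖r'‖ ^ 2 / 2)) •
              (gradient Fp θ + γ • r') := by
        funext r'
        congr 1
        ring
      -- term 3 inner gradient
      have h3f : (fun r' : EuclideanSpace ℝ (Fin d) =>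
            gradient (fun r'' => (Real.exp (-β * ‖r''‖ ^ 2 / 2) / Z₁) * η θ) r')
          = fun r' => ((-β * (η θ / Z₁)) * Real.exp (-β * ‖r'‖ ^ 2 / 2)) •
              ((0 : EuclideanSpace ℝ (Fin d)) + (1 : ℝ) • r') := by
        funext r'
        have heq : (fun r'' : EuclideanSpace ℝ (Fin d) =>
              (Real.exp (-β * ‖r''‖ ^ 2 / 2) / Z₁) * η θ)
            = fun r'' => (η θ / Z₁) * Real.exp (-β * ‖r''‖ ^ 2 / 2) := by
          funext r''
          ring
        rw [heq]
        have hga : HasGradientAt (fun r'' : EuclideanSpace ℝ (Fin d) =>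
              (η θ / Z₁) * Real.exp (-β * ‖r''‖ ^ 2 / 2))
            ((-β * ((η θ / Z₁) * Real.exp (-β * ‖r'‖ ^ 2 / 2))) • r') r' := by
          apply hasGradientAt_of_innerSL
          convert hasFDerivAt_gauss β (η θ / Z₁) r' using 1
          ext u
          simp [real_inner_smul_left]
        rw [hga.gradient]
        simp [mul_assoc]
      rw [h1, h2f, vdiv_gauss, h3f, vdiv_gauss] at h
      simp only [real_inner_smul_left, inner_add_right, inner_add_left, real_inner_smul_right,
        zero_add, one_smul, inner_zero_right, real_inner_self_eq_norm_sq,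
        real_inner_comm r (gradient Fp θ)] at h ⊢
      set X : ℝ := ⟪gradient η θ, r⟫ with hX
      set Y : ℝ := ⟪r, gradient Fp θ⟫ with hY
      have he : Real.exp (-β * ‖r‖ ^ 2 / 2) ≠ 0 := Real.exp_ne_zero _
      field_simp at h
      have hfac : (β * (Z₁ * Z₁) * Real.exp (-(β * ‖r‖ ^ 2) / 2)) * (X + β * η θ * Y) = 0 := by
        rw [show -(β * ‖r‖ ^ 2) / 2 = -(β * ‖r‖ ^ 2 / 2) by ring]
        linear_combination (β * Z₁ ^ 2) * h
      have hne : (β * (Z₁ * Z₁) * Real.exp (-(β * ‖r‖ ^ 2) / 2)) ≠ 0 := by positivity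
      exact (mul_eq_zero.mp hfac).resolve_left hne
    have h0 := key (gradient η θ + (β * η θ) • gradient Fp θ)
    exact inner_self_eq_zero.mp h0
  have hFpd : Differentiable ℝ Fp := by
    have h0 : Differentiable ℝ (fun _ : EuclideanSpace ℝ (Fin d) =>
        gradR (∫ θ', η θ' • Ψ θ')) := differentiable_const _
    exact (h0.inner ℝ hΨ).add hg
  have hG : ∀ θ : EuclideanSpace ℝ (Fin d),
      HasFDerivAt (fun θ' : EuclideanSpace ℝ (Fin d) => η θ' * Real.exp (β * Fp θ')) (0 : EuclideanSpace ℝ (Fin d) →L[ℝ] ℝ) θ := by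
    intro θ
    have hη' : HasFDerivAt η ((InnerProductSpace.toDual ℝ _) (gradient η θ)) θ :=
      (hηd θ).hasGradientAt.hasFDerivAt
    have hFp' : HasFDerivAt Fp ((InnerProductSpace.toDual ℝ _) (gradient Fp θ)) θ :=
      (hFpd θ).hasGradientAt.hasFDerivAt
    have hexp := (hFp'.const_mul β).exp
    have hmul := hη'.mul hexp
    refine hmul.congr_fderiv ?_
    symm
    ext w
    have hp : gradient η θ = -((β * η θ) • gradient Fp θ) :=
      eq_neg_of_add_eq_zero_left (part1 θ)
    simp [InnerProductSpace.toDual_apply_apply, hp, inner_neg_left, real_inner_smul_left]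
    ring
  have hconst : ∀ θ, η θ * Real.exp (β * Fp θ) = η 0 * Real.exp (β * Fp 0) := fun θ =>
    is_const_of_fderiv_eq_zero (fun x => (hG x).differentiableAt)
      (fun x => (hG x).fderiv) θ 0
  set C : ℝ := η 0 * Real.exp (β * Fp 0) with hC
  have hCpos : 0 < C := mul_pos (hηpos 0) (Real.exp_pos _)
  have hηeq : ∀ θ, η θ = C * Real.exp (-β * Fp θ) := by
    intro θ
    have h := hconst θ
    rw [neg_mul, Real.exp_neg]
    field_simp
    linarith [h]
  have hηint' : Integrable η := by
    by_contra hcon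
    rw [integral_undef hcon] at hηint
    norm_num at hηint
  have hExp : (fun θ => Real.exp (-β * Fp θ)) = fun θ => C⁻¹ * η θ := by
    funext θ
    rw [hηeq θ, inv_mul_cancel_left₀ hCpos.ne']
  have hInt : Integrable fun θ => Real.exp (-β * Fp θ) := by
    rw [hExp]
    exact hηint'.const_mul _
  have hIval : (∫ θ', Real.exp (-β * Fp θ')) = C⁻¹ := by
    rw [hExp, integral_const_mul, hηint, mul_one]
  refine ⟨part1, hInt, fun θ => ?_⟩
  rw [hIval, div_inv_eq_mul, hηeq θ, mul_comm]
end

section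
/- Under assumption (A4), for every β > 0, if ρ₁ and ρ₂ are probability densities on ℝ^d each satisfying the Boltzmann fixed point equation ρᵢ(θ) = exp(−βF'(ρᵢ)(θ))/Z₂(ρᵢ) for almost every θ (i = 1, 2), then ρ₁ = ρ₂ almost everywhere. In particular the Boltzmann operator T has at most one fixed point. (Uniqueness part of Proposition 4.2; the proof uses convexity of R and the Kullback–Leibler divergence.) -/
open MeasureTheory
open scoped RealInnerProductSpace


lemma kl_helper_nonneg (x y : ℝ) (hx : 0 < x) (hy : 0 < y) :
    0 ≤ (x - y) * (Real.log x - Real.log y) := by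
  rcases le_total x y with h | h
  · have := Real.log_le_log hx h
    nlinarith
  · have := Real.log_le_log hy h
    nlinarith

lemma kl_helper_eq (x y : ℝ) (hx : 0 < x) (hy : 0 < y)
    (h : (x - y) * (Real.log x - Real.log y) = 0) : x = y := by
  rcases lt_trichotomy x y with hlt | heq | hgt
  · have := Real.log_lt_log hx hlt
    nlinarith
  · exact heq
  · have := Real.log_lt_log hy hgt
    nlinarith

lemma grad_mono {F : Type*} [NormedAddCommGroup F] [InnerProductSpace ℝ F] [CompleteSpace F]
    (R : F → ℝ) (hRconv : ConvexOn ℝ Set.univ R)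
    (gradR : F → F) (hgradR : ∀ ψ, HasGradientAt R (gradR ψ) ψ) (x y : F) :
    0 ≤ ⟪gradR x - gradR y, x - y⟫ := by
  set c : ℝ → F := fun t => y + t • (x - y) with hc
  have hd : ∀ t : ℝ, HasDerivAt (fun s => R (c s)) ⟪gradR (c t), x - y⟫ t := by
    intro t
    have h1 : HasDerivAt c (x - y) t := by
      simpa [hc] using ((hasDerivAt_id t).smul_const (x - y)).const_add y
    have h2 := (hgradR (c t)).hasFDerivAt.comp_hasDerivAt t h1
    simpa [InnerProductSpace.toDual_apply_apply, Function.comp_def] using h2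
  have hφ : ConvexOn ℝ Set.univ (fun t : ℝ => R (c t)) := by
    have h := hRconv.comp_affineMap (AffineMap.lineMap y x : ℝ →ᵃ[ℝ] F)
    have he : (fun t : ℝ => R (c t)) = R ∘ (AffineMap.lineMap y x : ℝ →ᵃ[ℝ] F) := by
      funext t
      simp [hc, AffineMap.lineMap_apply, add_comm]
    rw [he]
    simpa using h
  have hmono := hφ.monotoneOn_deriv (fun t _ => (hd t).differentiableAt)
  have h01 := hmono (Set.mem_univ (0:ℝ)) (Set.mem_univ (1:ℝ)) zero_le_one
  rw [(hd 0).deriv, (hd 1).deriv] at h01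
  have hc0 : c 0 = y := by simp [hc]
  have hc1 : c 1 = x := by simp [hc]
  rw [hc0, hc1] at h01
  rw [inner_sub_left]
  linarith

lemma boltzmann_key {d : ℕ} (β : ℝ) (hβ : 0 < β)
    (ρ₁ ρ₂ a₁ a₂ g : EuclideanSpace ℝ (Fin d) → ℝ)
    (h₁0 : 0 ≤ ρ₁) (h₁int : Integrable ρ₁) (h₁1 : (∫ θ, ρ₁ θ) = 1)
    (h₂0 : 0 ≤ ρ₂) (h₂int : Integrable ρ₂) (h₂1 : (∫ θ, ρ₂ θ) = 1)
    (hint_cross : Integrable (fun θ => (ρ₁ θ - ρ₂ θ) * (a₂ θ - a₁ θ)))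
    (hcross : (∫ θ, (ρ₁ θ - ρ₂ θ) * (a₂ θ - a₁ θ)) ≤ 0)
    (hfix₁ : ∀ᵐ θ ∂(volume : Measure (EuclideanSpace ℝ (Fin d))),
      ρ₁ θ = Real.exp (-β * (a₁ θ + g θ)) / ∫ θ', Real.exp (-β * (a₁ θ' + g θ')))
    (hfix₂ : ∀ᵐ θ ∂(volume : Measure (EuclideanSpace ℝ (Fin d))),
      ρ₂ θ = Real.exp (-β * (a₂ θ + g θ)) / ∫ θ', Real.exp (-β * (a₂ θ' + g θ'))) :
    ρ₁ =ᵐ[(volume : Measure (EuclideanSpace ℝ (Fin d)))] ρ₂ := by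
  set Z₁ : ℝ := ∫ θ', Real.exp (-β * (a₁ θ' + g θ')) with hZ₁def
  set Z₂ : ℝ := ∫ θ', Real.exp (-β * (a₂ θ' + g θ')) with hZ₂def
  -- positivity of the partition functions
  have hZpos : ∀ (ρ a : EuclideanSpace ℝ (Fin d) → ℝ), (∫ θ, ρ θ) = 1 → 0 ≤ ρ →
      (∀ᵐ θ ∂(volume : Measure (EuclideanSpace ℝ (Fin d))),
        ρ θ = Real.exp (-β * (a θ + g θ)) / ∫ θ', Real.exp (-β * (a θ' + g θ'))) →
      0 < ∫ θ', Real.exp (-β * (a θ' + g θ')) := by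
    intro ρ a h1 h0 hfix
    by_contra hZ
    push_neg at hZ
    have hz : ρ =ᵐ[(volume : Measure (EuclideanSpace ℝ (Fin d)))] 0 := by
      filter_upwards [hfix] with θ hθ
      have hle : ρ θ ≤ 0 := by
        rw [hθ]
        exact div_nonpos_iff.2 (Or.inl ⟨(Real.exp_pos _).le, hZ⟩)
      exact le_antisymm hle (h0 θ)
    have := integral_congr_ae hz
    simp [h1] at this
  have hZ₁pos : 0 < Z₁ := hZpos ρ₁ a₁ h₁1 h₁0 hfix₁
  have hZ₂pos : 0 < Z₂ := hZpos ρ₂ a₂ h₂1 h₂0 hfix₂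
  set K : ℝ := Real.log Z₂ - Real.log Z₁ with hKdef
  set h : EuclideanSpace ℝ (Fin d) → ℝ :=
    fun θ => (ρ₁ θ - ρ₂ θ) * (β * (a₂ θ - a₁ θ) + K) with hhdef
  -- key a.e. information
  have hkey : ∀ᵐ θ ∂(volume : Measure (EuclideanSpace ℝ (Fin d))),
      0 < ρ₁ θ ∧ 0 < ρ₂ θ ∧
        β * (a₂ θ - a₁ θ) + K = Real.log (ρ₁ θ) - Real.log (ρ₂ θ) := by
    filter_upwards [hfix₁, hfix₂] with θ h1 h2
    have hp1 : 0 < ρ₁ θ := h1 ▸ div_pos (Real.exp_pos _) hZ₁pos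
    have hp2 : 0 < ρ₂ θ := h2 ▸ div_pos (Real.exp_pos _) hZ₂pos
    refine ⟨hp1, hp2, ?_⟩
    have hl1 : Real.log (ρ₁ θ) = -β * (a₁ θ + g θ) - Real.log Z₁ := by
      rw [h1, Real.log_div (Real.exp_ne_zero _) (ne_of_gt hZ₁pos), Real.log_exp]
    have hl2 : Real.log (ρ₂ θ) = -β * (a₂ θ + g θ) - Real.log Z₂ := by
      rw [h2, Real.log_div (Real.exp_ne_zero _) (ne_of_gt hZ₂pos), Real.log_exp]
    rw [hl1, hl2, hKdef]
    ring
  have hhnonneg : ∀ᵐ θ ∂(volume : Measure (EuclideanSpace ℝ (Fin d))), 0 ≤ h θ := by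
    filter_upwards [hkey] with θ ⟨hp1, hp2, he⟩
    rw [hhdef]
    simp only
    rw [he]
    exact kl_helper_nonneg _ _ hp1 hp2
  have hsubint : Integrable (fun θ => ρ₁ θ - ρ₂ θ)
      (volume : Measure (EuclideanSpace ℝ (Fin d))) := h₁int.sub h₂int
  have hrw : h = fun θ => β * ((ρ₁ θ - ρ₂ θ) * (a₂ θ - a₁ θ)) + K * (ρ₁ θ - ρ₂ θ) := by
    funext θ
    simp only [hhdef]
    ring
  have hhint : Integrable h := by
    rw [hrw]
    exact (hint_cross.const_mul β).add (hsubint.const_mul K)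
  have hsubzero : (∫ θ, (ρ₁ θ - ρ₂ θ)) = 0 := by
    rw [integral_sub h₁int h₂int, h₁1, h₂1]
    ring
  have hintle : (∫ θ, h θ) ≤ 0 := by
    have : (∫ θ, h θ) = β * (∫ θ, (ρ₁ θ - ρ₂ θ) * (a₂ θ - a₁ θ)) + K * ∫ θ, (ρ₁ θ - ρ₂ θ) := by
      rw [hrw, integral_add (hint_cross.const_mul β) (hsubint.const_mul K),
        integral_const_mul, integral_const_mul]
    rw [this, hsubzero]
    have := mul_nonpos_of_nonneg_of_nonpos hβ.le hcross
    linarith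
  have hintzero : (∫ θ, h θ) = 0 :=
    le_antisymm hintle (integral_nonneg_of_ae hhnonneg)
  have hzero : h =ᵐ[(volume : Measure (EuclideanSpace ℝ (Fin d)))] 0 :=
    (integral_eq_zero_iff_of_nonneg_ae hhnonneg hhint).1 hintzero
  filter_upwards [hkey, hzero] with θ ⟨hp1, hp2, he⟩ hz
  have : (ρ₁ θ - ρ₂ θ) * (Real.log (ρ₁ θ) - Real.log (ρ₂ θ)) = 0 := by
    rw [← he]
    simpa [hhdef] using hz
  exact kl_helper_eq _ _ hp1 hp2 this

/-- uniqueness part of Proposition 4.2: under assumption (A4), for every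
`β > 0`, if `ρ₁` and `ρ₂` are probability densities on `ℝ^d` each satisfying the
Boltzmann fixed point equation `ρᵢ(θ) = exp(−βF'(ρᵢ)(θ))/Z₂(ρᵢ)` for a.e. `θ`, then
`ρ₁ = ρ₂` almost everywhere; in particular the Boltzmann operator has at most one
fixed point.  Here `F'(ρ)(θ) = ⟨∇R(⟨Ψ,ρ⟩), Ψ(θ)⟩_ℱ + g(θ)`. -/
theorem stmt_3 {d : ℕ} {F : Type*} [NormedAddCommGroup F] [InnerProductSpace ℝ F]
    [CompleteSpace F]
    (R : F → ℝ) (hR0 : ∀ ψ, 0 ≤ R ψ) (hRconv : ConvexOn ℝ Set.univ R)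
    (gradR : F → F) (hgradR : ∀ ψ, HasGradientAt R (gradR ψ) ψ)
    (Ψ : EuclideanSpace ℝ (Fin d) → F)
    (g : EuclideanSpace ℝ (Fin d) → ℝ) (hg0 : ∀ θ, 0 ≤ g θ)
    (hA4int : ∀ ρ : EuclideanSpace ℝ (Fin d) → ℝ,
      Integrable ρ → 0 ≤ ρ → (∫ θ, ρ θ) ≤ 1 → Integrable fun θ => ρ θ • Ψ θ)
    (M₀ : ℝ)
    (hA4bdd : ∀ ρ : EuclideanSpace ℝ (Fin d) → ℝ,
      Integrable ρ → 0 ≤ ρ → (∫ θ, ρ θ) ≤ 1 →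
        ∀ θ, |⟪gradR (∫ t, ρ t • Ψ t), Ψ θ⟫| ≤ M₀)
    (hA4equi : ∀ ε : ℝ, 0 < ε → ∃ δ : ℝ, 0 < δ ∧
      ∀ ρ : EuclideanSpace ℝ (Fin d) → ℝ,
        Integrable ρ → 0 ≤ ρ → (∫ θ, ρ θ) ≤ 1 →
          ∀ θ θ' : EuclideanSpace ℝ (Fin d), dist θ θ' < δ →
            |⟪gradR (∫ t, ρ t • Ψ t), Ψ θ⟫ - ⟪gradR (∫ t, ρ t • Ψ t), Ψ θ'⟫| < ε)
    (hgdiff : Differentiable ℝ g)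
    (hgconf : Filter.Tendsto g (Filter.cocompact (EuclideanSpace ℝ (Fin d))) Filter.atTop)
    (hgexp : ∀ b : ℝ, 0 < b → Integrable fun θ => Real.exp (-b * g θ))
    (β : ℝ) (hβ : 0 < β)
    (ρ₁ ρ₂ : EuclideanSpace ℝ (Fin d) → ℝ)
    (h₁meas : Measurable ρ₁) (h₁0 : 0 ≤ ρ₁) (h₁int : Integrable ρ₁) (h₁1 : (∫ θ, ρ₁ θ) = 1)
    (h₂meas : Measurable ρ₂) (h₂0 : 0 ≤ ρ₂) (h₂int : Integrable ρ₂) (h₂1 : (∫ θ, ρ₂ θ) = 1)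
    (hfix₁ : ∀ᵐ θ ∂(volume : Measure (EuclideanSpace ℝ (Fin d))),
      ρ₁ θ = Real.exp (-β * (⟪gradR (∫ t, ρ₁ t • Ψ t), Ψ θ⟫ + g θ)) /
        ∫ θ', Real.exp (-β * (⟪gradR (∫ t, ρ₁ t • Ψ t), Ψ θ'⟫ + g θ')))
    (hfix₂ : ∀ᵐ θ ∂(volume : Measure (EuclideanSpace ℝ (Fin d))),
      ρ₂ θ = Real.exp (-β * (⟪gradR (∫ t, ρ₂ t • Ψ t), Ψ θ⟫ + g θ)) /
        ∫ θ', Real.exp (-β * (⟪gradR (∫ t, ρ₂ t • Ψ t), Ψ θ'⟫ + g θ'))) :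
    ρ₁ =ᵐ[(volume : Measure (EuclideanSpace ℝ (Fin d)))] ρ₂ := by
  have h₁le : (∫ θ, ρ₁ θ) ≤ 1 := le_of_eq h₁1
  have h₂le : (∫ θ, ρ₂ θ) ≤ 1 := le_of_eq h₂1
  have hΨ₁ : Integrable (fun θ => ρ₁ θ • Ψ θ) := hA4int ρ₁ h₁int h₁0 h₁le
  have hΨ₂ : Integrable (fun θ => ρ₂ θ • Ψ θ) := hA4int ρ₂ h₂int h₂0 h₂le
  have hsmul : (fun θ => (ρ₁ θ - ρ₂ θ) • Ψ θ) = fun θ => ρ₁ θ • Ψ θ - ρ₂ θ • Ψ θ :=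
    funext fun θ => sub_smul (ρ₁ θ) (ρ₂ θ) (Ψ θ)
  have hf : Integrable (fun θ => (ρ₁ θ - ρ₂ θ) • Ψ θ) := by
    rw [hsmul]; exact hΨ₁.sub hΨ₂
  have heq : (fun θ => (ρ₁ θ - ρ₂ θ) *
        (⟪gradR (∫ t, ρ₂ t • Ψ t), Ψ θ⟫ - ⟪gradR (∫ t, ρ₁ t • Ψ t), Ψ θ⟫))
      = fun θ => ⟪gradR (∫ t, ρ₂ t • Ψ t) - gradR (∫ t, ρ₁ t • Ψ t), (ρ₁ θ - ρ₂ θ) • Ψ θ⟫ := by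
    funext θ
    rw [real_inner_smul_right, inner_sub_left]
  have hint_cross : Integrable (fun θ => (ρ₁ θ - ρ₂ θ) *
      (⟪gradR (∫ t, ρ₂ t • Ψ t), Ψ θ⟫ - ⟪gradR (∫ t, ρ₁ t • Ψ t), Ψ θ⟫)) := by
    rw [heq]
    exact hf.const_inner _
  have hfint : (∫ θ, (ρ₁ θ - ρ₂ θ) • Ψ θ) = (∫ t, ρ₁ t • Ψ t) - (∫ t, ρ₂ t • Ψ t) := by
    rw [hsmul]
    exact integral_sub hΨ₁ hΨ₂
  have hIcross : (∫ θ, (ρ₁ θ - ρ₂ θ) *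
      (⟪gradR (∫ t, ρ₂ t • Ψ t), Ψ θ⟫ - ⟪gradR (∫ t, ρ₁ t • Ψ t), Ψ θ⟫)) ≤ 0 := by
    rw [heq, integral_inner hf, hfint]
    have hm := grad_mono R hRconv gradR hgradR (∫ t, ρ₁ t • Ψ t) (∫ t, ρ₂ t • Ψ t)
    rw [inner_sub_left] at hm ⊢
    linarith
  exact boltzmann_key β hβ ρ₁ ρ₂
    (fun θ => ⟪gradR (∫ t, ρ₁ t • Ψ t), Ψ θ⟫)
    (fun θ => ⟪gradR (∫ t, ρ₂ t • Ψ t), Ψ θ⟫) g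
    h₁0 h₁int h₁1 h₂0 h₂int h₂1 hint_cross hIcross hfix₁ hfix₂
end

section
/- Let d ≥ 1 and β, γ > 0. Let ρ be an everywhere positive, continuously differentiable probability density on ℝ^d × ℝ^d (variables (θ,r)) such that the functions (θ,r) ↦ |r|²ρ(θ,r), (θ,r) ↦ (1+|r|)|∇ρ(θ,r)|, and (θ,r) ↦ |∇_rρ(θ,r)|²/ρ(θ,r) are Lebesgue integrable, and let u : ℝ^d → ℝ^d be bounded and measurable (in the paper, u = ∇_θF'([ρ]^θ), which is bounded by assumption (A3)). Then ∫∫⟨∇_θρ(θ,r), r⟩ dθdr = 0 and ∫∫⟨∇_rρ(θ,r), u(θ)⟩ dθdr = 0, and consequently the free-energy dissipation identity holds: ∫∫ [ ⟨u(θ) + β⁻¹∇_θ log ρ(θ,r), r⟩ + ⟨r + β⁻¹∇_r log ρ(θ,r), −u(θ) − γr − γβ⁻¹∇_r log ρ(θ,r)⟩ ] ρ(θ,r) dθdr = −γ ∫∫ |r + β⁻¹∇_r log ρ(θ,r)|² ρ(θ,r) dθdr. (Static form of Proposition 3.2: the derivative of the free energy along the noisy heavy ball dynamics equals minus γ times the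 kinetic dissipation.) -/
open MeasureTheory
open scoped RealInnerProductSpace

open InnerProductSpace

noncomputable abbrev Euc (d : ℕ) : Type := EuclideanSpace ℝ (Fin d)

section helpers
variable {d : ℕ} {ρ : Euc d × Euc d → ℝ} (hρC1 : ContDiff ℝ 1 ρ)
include hρC1

lemma hasFDerivAt_partial_left (x y : Euc d) :
    HasFDerivAt (fun θ => ρ (θ, y))
      ((fderiv ℝ ρ (x, y)).comp (ContinuousLinearMap.inl ℝ (Euc d) (Euc d))) x :=
  ((hρC1.differentiable one_ne_zero (x, y)).hasFDerivAt).comp x (hasFDerivAt_prodMk_left x y)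

lemma hasFDerivAt_partial_right (x y : Euc d) :
    HasFDerivAt (fun r => ρ (x, r))
      ((fderiv ℝ ρ (x, y)).comp (ContinuousLinearMap.inr ℝ (Euc d) (Euc d))) y :=
  ((hρC1.differentiable one_ne_zero (x, y)).hasFDerivAt).comp y (hasFDerivAt_prodMk_right x y)

lemma grad_left_eq (x y : Euc d) :
    gradient (fun θ => ρ (θ, y)) x
      = (toDual ℝ (Euc d)).symm
          ((fderiv ℝ ρ (x, y)).comp (ContinuousLinearMap.inl ℝ (Euc d) (Euc d))) := by
  rw [gradient, (hasFDerivAt_partial_left hρC1 x y).fderiv]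

lemma grad_right_eq (x y : Euc d) :
    gradient (fun r => ρ (x, r)) y
      = (toDual ℝ (Euc d)).symm
          ((fderiv ℝ ρ (x, y)).comp (ContinuousLinearMap.inr ℝ (Euc d) (Euc d))) := by
  rw [gradient, (hasFDerivAt_partial_right hρC1 x y).fderiv]

lemma inner_grad_left (x y v : Euc d) :
    ⟪gradient (fun θ => ρ (θ, y)) x, v⟫ = fderiv ℝ ρ (x, y) (v, 0) := by
  rw [grad_left_eq hρC1, toDual_symm_apply]
  simp

lemma inner_grad_right (x y v : Euc d) :
    ⟪gradient (fun r => ρ (x, r)) y, v⟫ = fderiv ℝ ρ (x, y) (0, v) := by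
  rw [grad_right_eq hρC1, toDual_symm_apply]
  simp

lemma norm_grad_left_le (x y : Euc d) :
    ‖gradient (fun θ => ρ (θ, y)) x‖ ≤ ‖fderiv ℝ ρ (x, y)‖ := by
  rw [grad_left_eq hρC1, LinearIsometryEquiv.norm_map]
  refine ContinuousLinearMap.opNorm_le_bound _ (norm_nonneg _) fun v => ?_
  calc ‖(fderiv ℝ ρ (x, y)) ((v, 0) : Euc d × Euc d)‖
      ≤ ‖fderiv ℝ ρ (x, y)‖ * ‖((v, 0) : Euc d × Euc d)‖ := ContinuousLinearMap.le_opNorm _ _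
    _ = ‖fderiv ℝ ρ (x, y)‖ * ‖v‖ := by simp [Prod.norm_def]

lemma norm_grad_right_le (x y : Euc d) :
    ‖gradient (fun r => ρ (x, r)) y‖ ≤ ‖fderiv ℝ ρ (x, y)‖ := by
  rw [grad_right_eq hρC1, LinearIsometryEquiv.norm_map]
  refine ContinuousLinearMap.opNorm_le_bound _ (norm_nonneg _) fun v => ?_
  calc ‖(fderiv ℝ ρ (x, y)) ((0, v) : Euc d × Euc d)‖
      ≤ ‖fderiv ℝ ρ (x, y)‖ * ‖((0, v) : Euc d × Euc d)‖ := ContinuousLinearMap.le_opNorm _ _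
    _ = ‖fderiv ℝ ρ (x, y)‖ * ‖v‖ := by simp [Prod.norm_def]

lemma grad_log_right (hρpos : ∀ p, 0 < ρ p) (x y : Euc d) :
    gradient (fun r => Real.log (ρ (x, r))) y
      = (ρ (x, y))⁻¹ • gradient (fun r => ρ (x, r)) y := by
  have h := (hasFDerivAt_partial_right hρC1 x y).log (ne_of_gt (hρpos (x, y)))
  rw [gradient, h.fderiv, _root_.map_smul, grad_right_eq hρC1]

lemma grad_log_left (hρpos : ∀ p, 0 < ρ p) (x y : Euc d) :
    gradient (fun θ => Real.log (ρ (θ, y))) x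
      = (ρ (x, y))⁻¹ • gradient (fun θ => ρ (θ, y)) x := by
  have h := (hasFDerivAt_partial_left hρC1 x y).log (ne_of_gt (hρpos (x, y)))
  rw [gradient, h.fderiv, _root_.map_smul, grad_left_eq hρC1]


lemma pointwise_alg (hρpos : ∀ p, 0 < ρ p) {β γ : ℝ} (hβ : 0 < β) (x y w : Euc d) :
    (⟪w + β⁻¹ • gradient (fun θ => Real.log (ρ (θ, y))) x, y⟫
      + ⟪y + β⁻¹ • gradient (fun r => Real.log (ρ (x, r))) y,
          -w - γ • y - (γ * β⁻¹) • gradient (fun r => Real.log (ρ (x, r))) y⟫) * ρ (x, y)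
    = β⁻¹ * ⟪gradient (fun θ => ρ (θ, y)) x, y⟫
      - β⁻¹ * ⟪gradient (fun r => ρ (x, r)) y, w⟫
      - γ * (‖y + β⁻¹ • gradient (fun r => Real.log (ρ (x, r))) y‖ ^ 2 * ρ (x, y)) := by
  rw [grad_log_left hρC1 hρpos, grad_log_right hρC1 hρpos]
  set a := gradient (fun θ => ρ (θ, y)) x
  set b := gradient (fun r => ρ (x, r)) y
  set t := ρ (x, y) with hts
  have ht : 0 < t := hρpos (x, y)
  rw [← real_inner_self_eq_norm_sq]
  simp only [inner_add_left, inner_add_right, inner_sub_right, inner_neg_right,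
    real_inner_smul_left, real_inner_smul_right, real_inner_comm b y, real_inner_comm b w,
    real_inner_comm w y]
  field_simp
  ring

end helpers

set_option maxHeartbeats 2000000 in
/-- static form of Proposition 3.2: for an everywhere positive, C¹
probability density `ρ` on `ℝ^d × ℝ^d` with the stated integrability properties and a
bounded measurable vector field `u`, the two boundary terms vanish:
`∫∫ ⟨∇_θ ρ, r⟩ = 0` and `∫∫ ⟨∇_r ρ, u(θ)⟩ = 0`, and the free-energy dissipation
identity holds:
`∫∫ [⟨u + β⁻¹∇_θ log ρ, r⟩ + ⟨r + β⁻¹∇_r log ρ, −u − γr − γβ⁻¹∇_r log ρ⟩] ρ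
  = −γ ∫∫ |r + β⁻¹∇_r log ρ|² ρ`. -/
theorem stmt_5 {d : ℕ} (hd : 1 ≤ d) (β γ : ℝ) (hβ : 0 < β) (hγ : 0 < γ)
    (ρ : EuclideanSpace ℝ (Fin d) × EuclideanSpace ℝ (Fin d) → ℝ)
    (hρpos : ∀ p, 0 < ρ p) (hρC1 : ContDiff ℝ 1 ρ)
    (hρint : ∫ p, ρ p = 1)
    (hint1 : Integrable fun p : EuclideanSpace ℝ (Fin d) × EuclideanSpace ℝ (Fin d) =>
      ‖p.2‖ ^ 2 * ρ p)
    (hint2 : Integrable fun p : EuclideanSpace ℝ (Fin d) × EuclideanSpace ℝ (Fin d) =>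
      (1 + ‖p.2‖) * ‖fderiv ℝ ρ p‖)
    (hint3 : Integrable fun p : EuclideanSpace ℝ (Fin d) × EuclideanSpace ℝ (Fin d) =>
      ‖gradient (fun r => ρ (p.1, r)) p.2‖ ^ 2 / ρ p)
    (u : EuclideanSpace ℝ (Fin d) → EuclideanSpace ℝ (Fin d))
    (humeas : Measurable u) (M : ℝ) (hubdd : ∀ θ, ‖u θ‖ ≤ M) :
    (∫ p : EuclideanSpace ℝ (Fin d) × EuclideanSpace ℝ (Fin d),
        ⟪gradient (fun θ => ρ (θ, p.2)) p.1, p.2⟫ = 0) ∧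
    (∫ p : EuclideanSpace ℝ (Fin d) × EuclideanSpace ℝ (Fin d),
        ⟪gradient (fun r => ρ (p.1, r)) p.2, u p.1⟫ = 0) ∧
    (∫ p : EuclideanSpace ℝ (Fin d) × EuclideanSpace ℝ (Fin d),
        (⟪u p.1 + β⁻¹ • gradient (fun θ => Real.log (ρ (θ, p.2))) p.1, p.2⟫
          + ⟪p.2 + β⁻¹ • gradient (fun r => Real.log (ρ (p.1, r))) p.2,
              -u p.1 - γ • p.2
                - (γ * β⁻¹) • gradient (fun r => Real.log (ρ (p.1, r))) p.2⟫) * ρ p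
      = -γ * ∫ p : EuclideanSpace ℝ (Fin d) × EuclideanSpace ℝ (Fin d),
          ‖p.2 + β⁻¹ • gradient (fun r => Real.log (ρ (p.1, r))) p.2‖ ^ 2 * ρ p) := by
  classical
  have hρdiff : Differentiable ℝ ρ := hρC1.differentiable one_ne_zero
  have hρcont : Continuous ρ := hρC1.continuous
  have hfc : Continuous (fderiv ℝ ρ) := hρC1.continuous_fderiv one_ne_zero
  have hM0 : 0 ≤ M := le_trans (norm_nonneg _) (hubdd 0)
  haveI : (volume : Measure (Euc d × Euc d)).IsAddHaarMeasure := by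
    rw [Measure.volume_eq_prod]; exact Measure.prod.instIsAddHaarMeasure _ _
  have hρInt : Integrable ρ := by
    by_contra h
    rw [integral_undef h] at hρint
    norm_num at hρint
  -- coordinate bound
  have habs : ∀ (x : Euc d) (i : Fin d), |x i| ≤ ‖x‖ := by
    intro x i
    have h1 : x i = ⟪EuclideanSpace.single i (1 : ℝ), x⟫ := by
      rw [EuclideanSpace.inner_single_left]; simp
    rw [h1]
    calc |⟪EuclideanSpace.single i (1 : ℝ), x⟫| ≤ ‖EuclideanSpace.single i (1 : ℝ)‖ * ‖x‖ :=
          abs_real_inner_le_norm _ _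
      _ = ‖x‖ := by rw [EuclideanSpace.norm_single]; simp
  -- continuity of the gradient fields
  have hgθc : Continuous (fun p : Euc d × Euc d => gradient (fun θ => ρ (θ, p.2)) p.1) := by
    have he : (fun p : Euc d × Euc d => gradient (fun θ => ρ (θ, p.2)) p.1)
        = fun p => (toDual ℝ (Euc d)).symm
            ((fderiv ℝ ρ p).comp (ContinuousLinearMap.inl ℝ (Euc d) (Euc d))) := by
      funext p; exact grad_left_eq hρC1 p.1 p.2
    rw [he]
    exact (toDual ℝ (Euc d)).symm.continuous.comp (hfc.clm_comp continuous_const)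
  have hgrc : Continuous (fun p : Euc d × Euc d => gradient (fun r => ρ (p.1, r)) p.2) := by
    have he : (fun p : Euc d × Euc d => gradient (fun r => ρ (p.1, r)) p.2)
        = fun p => (toDual ℝ (Euc d)).symm
            ((fderiv ℝ ρ p).comp (ContinuousLinearMap.inr ℝ (Euc d) (Euc d))) := by
      funext p; exact grad_right_eq hρC1 p.1 p.2
    rw [he]
    exact (toDual ℝ (Euc d)).symm.continuous.comp (hfc.clm_comp continuous_const)
  -- majorant integrable
  have hmaj : Integrable (fun p : Euc d × Euc d => (1 + ‖p.2‖) * ‖fderiv ℝ ρ p‖) := hint2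
  -- key vanishing integrals for each coordinate direction (θ side)
  have hterm_int : ∀ i : Fin d, Integrable (fun p : Euc d × Euc d =>
      p.2 i * fderiv ℝ ρ p (EuclideanSpace.single i (1 : ℝ), 0)) := by
    intro i
    refine hmaj.mono' ?_ ?_
    · exact (((EuclideanSpace.proj i).continuous.comp continuous_snd).mul
        (hfc.clm_apply continuous_const)).aestronglyMeasurable
    · refine Filter.Eventually.of_forall fun p => ?_
      have h1 : ‖(((EuclideanSpace.single i (1 : ℝ) : Euc d), (0 : Euc d)) : Euc d × Euc d)‖ = 1 := by
        simp [Prod.norm_def, EuclideanSpace.norm_single]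
      have h2 : |fderiv ℝ ρ p (EuclideanSpace.single i (1 : ℝ), 0)| ≤ ‖fderiv ℝ ρ p‖ := by
        calc |fderiv ℝ ρ p (EuclideanSpace.single i (1 : ℝ), 0)|
            ≤ ‖fderiv ℝ ρ p‖ * ‖(((EuclideanSpace.single i (1 : ℝ) : Euc d), (0 : Euc d)) : Euc d × Euc d)‖ :=
              (fderiv ℝ ρ p).le_opNorm _
          _ = ‖fderiv ℝ ρ p‖ := by rw [h1, mul_one]
      have h3 := habs p.2 i
      rw [Real.norm_eq_abs, abs_mul]
      calc |p.2 i| * |fderiv ℝ ρ p (EuclideanSpace.single i (1 : ℝ), 0)|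
          ≤ ‖p.2‖ * ‖fderiv ℝ ρ p‖ :=
            mul_le_mul h3 h2 (abs_nonneg _) (norm_nonneg _)
        _ ≤ (1 + ‖p.2‖) * ‖fderiv ℝ ρ p‖ :=
            mul_le_mul_of_nonneg_right (by linarith [norm_nonneg p.2]) (norm_nonneg _)
  have key1 : ∀ i : Fin d, ∫ p : Euc d × Euc d,
      p.2 i * fderiv ℝ ρ p (EuclideanSpace.single i (1 : ℝ), 0) = 0 := by
    intro i
    set L : Euc d × Euc d →L[ℝ] ℝ :=
      (EuclideanSpace.proj i).comp (ContinuousLinearMap.snd ℝ (Euc d) (Euc d)) with hL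
    have hfun : (fun p : Euc d × Euc d => p.2 i) = fun p => L p := rfl
    have hfderivL : ∀ p : Euc d × Euc d, fderiv ℝ (fun p : Euc d × Euc d => p.2 i) p = L := by
      intro p; rw [hfun]; exact L.fderiv
    have hzero : (fun p : Euc d × Euc d =>
        fderiv ℝ (fun p : Euc d × Euc d => p.2 i) p (EuclideanSpace.single i (1 : ℝ), 0) * ρ p)
        = fun _ => (0 : ℝ) := by
      funext p
      rw [hfderivL p]
      simp [hL]
    have h := integral_mul_fderiv_eq_neg_fderiv_mul_of_integrable (μ := volume)
      (f := fun p : Euc d × Euc d => p.2 i) (g := ρ)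
      (v := ((EuclideanSpace.single i (1 : ℝ) : Euc d), (0 : Euc d)))
      ?_ ?_ ?_ (fun x _ => L.differentiable x) (fun x _ => hρdiff x)
    · rw [h, hzero]
      simp
    · rw [hzero]
      exact integrable_zero _ _ _
    · exact hterm_int i
    · refine (hρInt.add hint1).mono' ?_ ?_
      · exact (((EuclideanSpace.proj i).continuous.comp continuous_snd).mul
          hρcont).aestronglyMeasurable
      · refine Filter.Eventually.of_forall fun p => ?_
        have h3 := habs p.2 i
        have h5 := (hρpos p).le
        rw [Real.norm_eq_abs, abs_mul, abs_of_nonneg h5]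
        calc |p.2 i| * ρ p ≤ ‖p.2‖ * ρ p := mul_le_mul_of_nonneg_right h3 h5
          _ ≤ (1 + ‖p.2‖ ^ 2) * ρ p := by
              refine mul_le_mul_of_nonneg_right ?_ h5
              nlinarith [sq_nonneg (1 - ‖p.2‖)]
          _ = ρ p + ‖p.2‖ ^ 2 * ρ p := by ring
  -- decomposition of (y, 0)
  have hdecomp : ∀ y : Euc d, ((y, 0) : Euc d × Euc d)
      = ∑ i : Fin d, y i • ((EuclideanSpace.single i (1 : ℝ) : Euc d), (0 : Euc d)) := by
    intro y
    have h1 : y = ∑ i : Fin d, y i • (EuclideanSpace.single i (1 : ℝ) : Euc d) := by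
      have := (EuclideanSpace.basisFun (Fin d) ℝ).sum_repr y
      simp only [EuclideanSpace.basisFun_apply, EuclideanSpace.basisFun_repr] at this
      exact this.symm
    refine Prod.ext ?_ ?_
    · rw [Prod.fst_sum]
      simpa using h1
    · rw [Prod.snd_sum]
      simp
  -- PART 1
  have hA_int : Integrable (fun p : Euc d × Euc d => ⟪gradient (fun θ => ρ (θ, p.2)) p.1, p.2⟫) := by
    refine hmaj.mono' (hgθc.inner continuous_snd).aestronglyMeasurable ?_
    refine Filter.Eventually.of_forall fun p => ?_
    rw [Real.norm_eq_abs]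
    calc |⟪gradient (fun θ => ρ (θ, p.2)) p.1, p.2⟫|
        ≤ ‖gradient (fun θ => ρ (θ, p.2)) p.1‖ * ‖p.2‖ := abs_real_inner_le_norm _ _
      _ ≤ ‖fderiv ℝ ρ p‖ * ‖p.2‖ := by
          exact mul_le_mul_of_nonneg_right (norm_grad_left_le hρC1 p.1 p.2) (norm_nonneg _)
      _ = ‖p.2‖ * ‖fderiv ℝ ρ p‖ := mul_comm _ _
      _ ≤ (1 + ‖p.2‖) * ‖fderiv ℝ ρ p‖ :=
          mul_le_mul_of_nonneg_right (by linarith [norm_nonneg p.2]) (norm_nonneg _)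
  have part1 : ∫ p : Euc d × Euc d, ⟪gradient (fun θ => ρ (θ, p.2)) p.1, p.2⟫ = 0 := by
    have hfun : (fun p : Euc d × Euc d => ⟪gradient (fun θ => ρ (θ, p.2)) p.1, p.2⟫)
        = fun p => ∑ i : Fin d, p.2 i * fderiv ℝ ρ p (EuclideanSpace.single i (1 : ℝ), 0) := by
      funext p
      rw [inner_grad_left hρC1]
      rw [show ((p.2, 0) : Euc d × Euc d)
          = ∑ i : Fin d, p.2 i • ((EuclideanSpace.single i (1 : ℝ) : Euc d), (0 : Euc d)) from
          hdecomp p.2]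
      rw [map_sum]
      refine Finset.sum_congr rfl fun i _ => ?_
      rw [_root_.map_smul]
      rfl
    rw [hfun, integral_finset_sum _ (fun i _ => hterm_int i)]
    simp [key1]
  -- PART 2
  have hB_int : Integrable
      (fun p : Euc d × Euc d => ⟪gradient (fun r => ρ (p.1, r)) p.2, u p.1⟫) := by
    refine (hint2.const_mul M).mono' ?_ ?_
    · exact (hgrc.measurable.inner (humeas.comp measurable_fst)).aestronglyMeasurable
    · refine Filter.Eventually.of_forall fun p => ?_
      rw [Real.norm_eq_abs]
      calc |⟪gradient (fun r => ρ (p.1, r)) p.2, u p.1⟫|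
          ≤ ‖gradient (fun r => ρ (p.1, r)) p.2‖ * ‖u p.1‖ := abs_real_inner_le_norm _ _
        _ ≤ ‖fderiv ℝ ρ p‖ * M :=
            mul_le_mul (norm_grad_right_le hρC1 p.1 p.2) (hubdd p.1) (norm_nonneg _)
              (norm_nonneg _)
        _ = M * ‖fderiv ℝ ρ p‖ := mul_comm _ _
        _ ≤ M * ((1 + ‖p.2‖) * ‖fderiv ℝ ρ p‖) := by
            refine mul_le_mul_of_nonneg_left ?_ hM0
            refine le_mul_of_one_le_left (norm_nonneg _) ?_
            linarith [norm_nonneg p.2]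
  have part2 : ∫ p : Euc d × Euc d, ⟪gradient (fun r => ρ (p.1, r)) p.2, u p.1⟫ = 0 := by
    have hBint' : Integrable
        (fun p : Euc d × Euc d => ⟪gradient (fun r => ρ (p.1, r)) p.2, u p.1⟫)
        ((volume : Measure (Euc d)).prod (volume : Measure (Euc d))) := by
      rwa [← Measure.volume_eq_prod]
    have hρInt' : Integrable ρ ((volume : Measure (Euc d)).prod (volume : Measure (Euc d))) := by
      rwa [← Measure.volume_eq_prod]
    rw [Measure.volume_eq_prod, integral_prod _ hBint']
    have hae : ∀ᵐ θ : Euc d, (∫ r : Euc d, ⟪gradient (fun r' => ρ (θ, r')) r, u θ⟫) = 0 := by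
      filter_upwards [hBint'.prod_right_ae, hρInt'.prod_right_ae] with θ h1 h2
      have hre : (fun r : Euc d => ⟪gradient (fun r' => ρ (θ, r')) r, u θ⟫)
          = fun r => fderiv ℝ (fun r' => ρ (θ, r')) r (u θ) := by
        funext r
        rw [gradient, toDual_symm_apply]
      have h1' : Integrable (fun r : Euc d => fderiv ℝ (fun r' => ρ (θ, r')) r (u θ)) := by
        rw [← hre]; exact h1
      rw [hre]
      have hdg : Differentiable ℝ (fun r' : Euc d => ρ (θ, r')) :=
        fun r => (hasFDerivAt_partial_right hρC1 θ r).differentiableAt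
      have h := integral_mul_fderiv_eq_neg_fderiv_mul_of_integrable
        (μ := (volume : Measure (Euc d)))
        (f := fun _ : Euc d => (1 : ℝ)) (g := fun r : Euc d => ρ (θ, r)) (v := u θ)
        ?_ ?_ ?_ (fun x _ => differentiable_const _ x) (fun x _ => hdg x)
      · simpa using h
      · have hz : (fun r : Euc d => fderiv ℝ (fun _ : Euc d => (1 : ℝ)) r (u θ) * ρ (θ, r))
            = fun _ => (0 : ℝ) := by
          funext r; simp
        rw [hz]; exact integrable_zero _ _ _
      · simpa [one_mul] using h1'
      · simpa [one_mul] using h2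
    exact (integral_congr_ae hae).trans (integral_zero _ _)
  -- PART 3
  have hC_int : Integrable (fun p : Euc d × Euc d =>
      ‖p.2 + β⁻¹ • gradient (fun r => Real.log (ρ (p.1, r))) p.2‖ ^ 2 * ρ p) := by
    have hfe : (fun p : Euc d × Euc d =>
        ‖p.2 + β⁻¹ • gradient (fun r => Real.log (ρ (p.1, r))) p.2‖ ^ 2 * ρ p)
        = fun p => ‖p.2 + β⁻¹ • ((ρ p)⁻¹ • gradient (fun r => ρ (p.1, r)) p.2)‖ ^ 2 * ρ p := by
      funext p
      rw [grad_log_right hρC1 hρpos]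
    rw [hfe]
    refine ((hint1.const_mul 2).add (hint3.const_mul (2 * β⁻¹ ^ 2))).mono' ?_ ?_
    · refine Continuous.aestronglyMeasurable ?_
      refine Continuous.mul ?_ hρcont
      refine Continuous.pow ?_ 2
      refine Continuous.norm ?_
      refine continuous_snd.add ?_
      exact ((hρcont.inv₀ fun p => (hρpos p).ne').smul hgrc).const_smul β⁻¹
    · refine Filter.Eventually.of_forall fun p => ?_
      simp only [Pi.add_apply]
      set b := gradient (fun r => ρ (p.1, r)) p.2
      set t := ρ p with hts
      have ht : 0 < t := hρpos p
      have hβi : 0 < β⁻¹ := inv_pos.2 hβ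
      have hti : 0 < t⁻¹ := inv_pos.2 ht
      have hnorm : ‖p.2 + β⁻¹ • (t⁻¹ • b)‖ ≤ ‖p.2‖ + β⁻¹ * (t⁻¹ * ‖b‖) := by
        refine (norm_add_le _ _).trans ?_
        rw [norm_smul, norm_smul, Real.norm_eq_abs, Real.norm_eq_abs,
          abs_of_pos hβi, abs_of_pos hti]
      have hdiv : ‖b‖ ^ 2 / t = (t⁻¹ * ‖b‖) ^ 2 * t := by
        field_simp
      rw [Real.norm_eq_abs, abs_of_nonneg (mul_nonneg (sq_nonneg _) ht.le), hdiv]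
      have hgoal : ‖p.2 + β⁻¹ • (t⁻¹ • b)‖ ^ 2 ≤ 2 * ‖p.2‖ ^ 2 + 2 * β⁻¹ ^ 2 * (t⁻¹ * ‖b‖) ^ 2 := by
        nlinarith [hnorm, norm_nonneg (p.2 + β⁻¹ • (t⁻¹ • b)), norm_nonneg p.2,
          mul_nonneg (mul_nonneg hβi.le hti.le) (norm_nonneg b),
          sq_nonneg (‖p.2‖ - β⁻¹ * (t⁻¹ * ‖b‖)),
          mul_nonneg (sub_nonneg.2 hnorm)
            (add_nonneg (add_nonneg (norm_nonneg p.2)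
              (mul_nonneg hβi.le (mul_nonneg hti.le (norm_nonneg b))))
              (norm_nonneg (p.2 + β⁻¹ • (t⁻¹ • b))))]
      calc ‖p.2 + β⁻¹ • (t⁻¹ • b)‖ ^ 2 * t
          ≤ (2 * ‖p.2‖ ^ 2 + 2 * β⁻¹ ^ 2 * (t⁻¹ * ‖b‖) ^ 2) * t :=
            mul_le_mul_of_nonneg_right hgoal ht.le
        _ = 2 * (‖p.2‖ ^ 2 * t) + 2 * β⁻¹ ^ 2 * ((t⁻¹ * ‖b‖) ^ 2 * t) := by ring
  have hsplit : (fun p : Euc d × Euc d =>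
      (⟪u p.1 + β⁻¹ • gradient (fun θ => Real.log (ρ (θ, p.2))) p.1, p.2⟫
        + ⟪p.2 + β⁻¹ • gradient (fun r => Real.log (ρ (p.1, r))) p.2,
            -u p.1 - γ • p.2
              - (γ * β⁻¹) • gradient (fun r => Real.log (ρ (p.1, r))) p.2⟫) * ρ p)
      = fun p => β⁻¹ * ⟪gradient (fun θ => ρ (θ, p.2)) p.1, p.2⟫
          - β⁻¹ * ⟪gradient (fun r => ρ (p.1, r)) p.2, u p.1⟫
          - γ * (‖p.2 + β⁻¹ • gradient (fun r => Real.log (ρ (p.1, r))) p.2‖ ^ 2 * ρ p) :=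
    funext fun p => pointwise_alg hρC1 hρpos hβ p.1 p.2 (u p.1)
  refine ⟨part1, part2, ?_⟩
  have hA' : Integrable (fun p : Euc d × Euc d =>
      β⁻¹ * ⟪gradient (fun θ => ρ (θ, p.2)) p.1, p.2⟫) := hA_int.const_mul β⁻¹
  have hB' : Integrable (fun p : Euc d × Euc d =>
      β⁻¹ * ⟪gradient (fun r => ρ (p.1, r)) p.2, u p.1⟫) := hB_int.const_mul β⁻¹
  have hAB : Integrable (fun p : Euc d × Euc d =>
      β⁻¹ * ⟪gradient (fun θ => ρ (θ, p.2)) p.1, p.2⟫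
        - β⁻¹ * ⟪gradient (fun r => ρ (p.1, r)) p.2, u p.1⟫) := hA'.sub hB'
  have hC' : Integrable (fun p : Euc d × Euc d =>
      γ * (‖p.2 + β⁻¹ • gradient (fun r => Real.log (ρ (p.1, r))) p.2‖ ^ 2 * ρ p)) :=
    hC_int.const_mul γ
  rw [hsplit, integral_sub hAB hC', integral_sub hA' hB',
    integral_const_mul, integral_const_mul, integral_const_mul, part1, part2]
  ring
end

section
/- Assume R : ℱ → [0,∞) and that g : ℝ^d → [0,∞) satisfies ∫exp(−βg(θ))dθ < ∞ for every β > 0. For α > 0 let C(α) := 1 + ∫∫_{ℝ^d×ℝ^d} (1 + αg(θ) + α|r|²/2) e^{−1−αg(θ)−α|r|²/2} dθ dr, which is finite. Let β > 0 and let ρ be a probability density on ℝ^d × ℝ^d such that ∫∫(g(θ)+|r|²/2)ρ(θ,r)dθdr < ∞ and Ψ is Bochner integrable with respect to [ρ]^θ(θ)dθ; then ∫∫ρ log ρ is well-defined in (−∞,∞], E(ρ) is well-defined in (−∞,∞], and for every α with 0 < α ≤ β: F₀([ρ]^θ) + (1 − α/β)∫∫(g(θ)+|r|²/2)ρ dθdr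 + β⁻¹∫∫ρ log⁺ρ dθdr ≤ E(ρ) + C(α)/β, where log⁺x := max{log x, 0}. In particular E(ρ) ≥ F₀([ρ]^θ) + (1−α/β)∫g(θ)[ρ]^θ(θ)dθ − C(α)/β. (Proposition B.1 and the key estimate of Proposition B.2: lower bound on the free energy.) -/
open MeasureTheory Real
open scoped RealInnerProductSpace ENNReal

set_option maxHeartbeats 2000000

lemma gauss_int {d : ℕ} {b : ℝ} (hb : 0 < b) :
    Integrable (fun v : EuclideanSpace ℝ (Fin d) => Real.exp (-b * ‖v‖ ^ 2)) := by
  have h := GaussianFourier.integrable_cexp_neg_mul_sq_norm_add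
    (V := EuclideanSpace ℝ (Fin d)) (b := (b : ℂ)) (by simpa using hb) 0 0
  refine h.norm.congr ?_
  filter_upwards with v
  rw [Complex.norm_exp]
  norm_num
  left; norm_cast

lemma aux_xlog {x m : ℝ} (hx : 0 ≤ x) (hm : 0 ≤ m) :
    x * max (-Real.log x) 0 ≤ m * x + Real.exp (-1 - m) := by
  have ha : (0:ℝ) < Real.exp (-1 - m) := Real.exp_pos _
  rcases le_or_gt (Real.log x) 0 with h | h
  · rw [max_eq_left (by linarith)]
    rcases eq_or_lt_of_le hx with hx0 | hx0
    · rw [← hx0]; simpa using by nlinarith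
    · have h1 : Real.log (Real.exp (-1-m) * x⁻¹) ≤ Real.exp (-1-m) * x⁻¹ - 1 :=
        Real.log_le_sub_one_of_pos (by positivity)
      rw [Real.log_mul (ne_of_gt ha) (by positivity), Real.log_exp, Real.log_inv] at h1
      have hx1 : x * x⁻¹ = 1 := mul_inv_cancel₀ (ne_of_gt hx0)
      nlinarith [mul_le_mul_of_nonneg_left h1 hx0.le]
  · rw [max_eq_right (by linarith)]
    nlinarith

lemma aux_onept {t : ℝ} (ht : 0 ≤ t) :
    (1 + t) * Real.exp (-1 - t) ≤ 2 * Real.exp (-(t/2)) := by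
  have h2 : (1 + t) * Real.exp (-(1 + t/2)) ≤ 2 := by
    have hmul : Real.exp (1 + t/2) * Real.exp (-(1 + t/2)) = 1 := by
      rw [← Real.exp_add, show (1+t/2) + -(1+t/2) = 0 by ring, Real.exp_zero]
    have hee : 1 + (1 + t/2) ≤ Real.exp (1 + t/2) := by
      linarith [Real.add_one_le_exp (1 + t/2)]
    nlinarith [Real.exp_pos (-(1 + t/2)), Real.exp_pos (1 + t/2)]
  have h3 : Real.exp (-1 - t) = Real.exp (-(1+t/2)) * Real.exp (-(t/2)) := by
    rw [← Real.exp_add]; congr 1; ring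
  nlinarith [Real.exp_pos (-(t/2)), Real.exp_pos (-(1+t/2))]


/-- Positive part `∫∫ ρ log⁺ ρ` of the negative entropy, valued in `[0,∞]`. -/
noncomputable def entP {d : ℕ}
    (ρ : EuclideanSpace ℝ (Fin d) × EuclideanSpace ℝ (Fin d) → ℝ) : ℝ≥0∞ :=
  ∫⁻ p, ENNReal.ofReal (ρ p * max (Real.log (ρ p)) 0)

/-- Negative part `∫∫ ρ log⁻ ρ` of the negative entropy, valued in `[0,∞]`. -/
noncomputable def entN {d : ℕ}
    (ρ : EuclideanSpace ℝ (Fin d) × EuclideanSpace ℝ (Fin d) → ℝ) : ℝ≥0∞ :=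
  ∫⁻ p, ENNReal.ofReal (ρ p * max (-Real.log (ρ p)) 0)

/-- The free energy `E(ρ) = F([ρ]^θ) + ∫∫(|r|²/2)ρ + β⁻¹∫∫ρ log ρ`, valued in `EReal`,
where `F(η) = R(⟨Ψ,η⟩) + ∫gη` and `[ρ]^θ(θ) = ∫ρ(θ,r)dr` is the `θ`-marginal. -/
noncomputable def fEnergy {d : ℕ} {F : Type*} [NormedAddCommGroup F]
    [InnerProductSpace ℝ F] [CompleteSpace F]
    (R : F → ℝ) (Ψ : EuclideanSpace ℝ (Fin d) → F) (g : EuclideanSpace ℝ (Fin d) → ℝ)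
    (β : ℝ) (ρ : EuclideanSpace ℝ (Fin d) × EuclideanSpace ℝ (Fin d) → ℝ) : EReal :=
  ((R (∫ θ, (∫ r, ρ (θ, r)) • Ψ θ) + (∫ θ, g θ * ∫ r, ρ (θ, r))
      + ∫ p, (‖p.2‖ ^ 2 / 2) * ρ p : ℝ) : EReal)
    + ((β⁻¹ : ℝ) : EReal) * ((entP ρ : ℝ≥0∞) : EReal)
    - ((β⁻¹ : ℝ) : EReal) * ((entN ρ : ℝ≥0∞) : EReal)

/-- Propositions B.1 and B.2, lower bound on the free energy: assume
`R ≥ 0` and `∫exp(−bg) < ∞` for all `b > 0`.  For `α > 0` the constant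
`C(α) = 1 + ∫∫(1+αg+α|r|²/2)e^{−1−αg−α|r|²/2}` is finite.  For `β > 0` and a
probability density `ρ` on `ℝ^d × ℝ^d` with `∫∫(g+|r|²/2)ρ < ∞` and `Ψ` Bochner
integrable against the `θ`-marginal, `∫∫ρ log ρ` and `E(ρ)` are well-defined in
`(−∞,∞]`, and for every `0 < α ≤ β`:
`F₀([ρ]^θ) + (1−α/β)∫∫(g+|r|²/2)ρ + β⁻¹∫∫ρlog⁺ρ ≤ E(ρ) + C(α)/β`;
in particular `E(ρ) ≥ F₀([ρ]^θ) + (1−α/β)∫g[ρ]^θ − C(α)/β`. -/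
theorem stmt_6 {d : ℕ} {F : Type*} [NormedAddCommGroup F] [InnerProductSpace ℝ F]
    [CompleteSpace F]
    (R : F → ℝ) (hR0 : ∀ ψ, 0 ≤ R ψ)
    (Ψ : EuclideanSpace ℝ (Fin d) → F)
    (g : EuclideanSpace ℝ (Fin d) → ℝ) (hg0 : ∀ θ, 0 ≤ g θ) (hgmeas : Measurable g)
    (hgexp : ∀ b : ℝ, 0 < b → Integrable fun θ => Real.exp (-b * g θ))
    (β : ℝ) (hβ : 0 < β)
    (ρ : EuclideanSpace ℝ (Fin d) × EuclideanSpace ℝ (Fin d) → ℝ)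
    (hρmeas : Measurable ρ) (hρ0 : 0 ≤ ρ) (hρint : Integrable ρ) (hρ1 : (∫ p, ρ p) = 1)
    (hmom : Integrable fun p : EuclideanSpace ℝ (Fin d) × EuclideanSpace ℝ (Fin d) =>
      (g p.1 + ‖p.2‖ ^ 2 / 2) * ρ p)
    (hΨm : Integrable fun θ => (∫ r, ρ (θ, r)) • Ψ θ) :
    (∀ α : ℝ, 0 < α →
      Integrable fun p : EuclideanSpace ℝ (Fin d) × EuclideanSpace ℝ (Fin d) =>
        (1 + α * g p.1 + α * (‖p.2‖ ^ 2 / 2)) *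
          Real.exp (-1 - α * g p.1 - α * (‖p.2‖ ^ 2 / 2))) ∧
    (Integrable fun p : EuclideanSpace ℝ (Fin d) × EuclideanSpace ℝ (Fin d) =>
      ρ p * max (-Real.log (ρ p)) 0) ∧
    fEnergy R Ψ g β ρ ≠ ⊥ ∧
    (∀ α : ℝ, 0 < α → α ≤ β →
      ((R (∫ θ, (∫ r, ρ (θ, r)) • Ψ θ)
          + (1 - α / β) * ∫ p, (g p.1 + ‖p.2‖ ^ 2 / 2) * ρ p : ℝ) : EReal)
          + ((β⁻¹ : ℝ) : EReal) * ((entP ρ : ℝ≥0∞) : EReal)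
        ≤ fEnergy R Ψ g β ρ
          + (((1 + ∫ p : EuclideanSpace ℝ (Fin d) × EuclideanSpace ℝ (Fin d),
                (1 + α * g p.1 + α * (‖p.2‖ ^ 2 / 2)) *
                  Real.exp (-1 - α * g p.1 - α * (‖p.2‖ ^ 2 / 2))) / β : ℝ) : EReal)) ∧
    (∀ α : ℝ, 0 < α → α ≤ β →
      ((R (∫ θ, (∫ r, ρ (θ, r)) • Ψ θ)
          + (1 - α / β) * (∫ θ, g θ * ∫ r, ρ (θ, r))
          - (1 + ∫ p : EuclideanSpace ℝ (Fin d) × EuclideanSpace ℝ (Fin d),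
                (1 + α * g p.1 + α * (‖p.2‖ ^ 2 / 2)) *
                  Real.exp (-1 - α * g p.1 - α * (‖p.2‖ ^ 2 / 2))) / β : ℝ) : EReal)
        ≤ fEnergy R Ψ g β ρ) := by
  have hρ0' : ∀ p, 0 ≤ ρ p := fun p => hρ0 p
  have hm0 : ∀ p : EuclideanSpace ℝ (Fin d) × EuclideanSpace ℝ (Fin d),
      0 ≤ g p.1 + ‖p.2‖ ^ 2 / 2 := fun p => add_nonneg (hg0 p.1) (by positivity)
  have hexp_int : ∀ c : ℝ, 0 < c →
      Integrable (fun p : EuclideanSpace ℝ (Fin d) × EuclideanSpace ℝ (Fin d) =>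
        Real.exp (-c * (g p.1 + ‖p.2‖ ^ 2 / 2))) := by
    intro c hc
    have h3 := (hgexp c hc).mul_prod (gauss_int (d := d) (by linarith : (0:ℝ) < c/2))
    rw [← Measure.volume_eq_prod] at h3
    refine h3.congr ?_
    filter_upwards with p
    rw [← Real.exp_add]; congr 1; ring
  -- Conjunct 1
  have hC1 : ∀ α : ℝ, 0 < α →
      Integrable fun p : EuclideanSpace ℝ (Fin d) × EuclideanSpace ℝ (Fin d) =>
        (1 + α * g p.1 + α * (‖p.2‖ ^ 2 / 2)) *
          Real.exp (-1 - α * g p.1 - α * (‖p.2‖ ^ 2 / 2)) := by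
    intro α hα
    have hdom := (hexp_int (α/2) (by linarith)).const_mul 2
    refine hdom.mono (Measurable.aestronglyMeasurable (by fun_prop)) ?_
    filter_upwards with p
    have ht : 0 ≤ α * (g p.1 + ‖p.2‖ ^ 2 / 2) := mul_nonneg hα.le (hm0 p)
    have h1pos : (0:ℝ) ≤ 1 + α * g p.1 + α * (‖p.2‖ ^ 2 / 2) := by
      have := mul_nonneg hα.le (hg0 p.1); positivity
    rw [Real.norm_of_nonneg (mul_nonneg h1pos (Real.exp_pos _).le),
      Real.norm_of_nonneg (by positivity)]
    have e1 : -1 - α * g p.1 - α * (‖p.2‖ ^ 2 / 2) = -1 - α * (g p.1 + ‖p.2‖ ^ 2 / 2) := by ring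
    have e2 : 1 + α * g p.1 + α * (‖p.2‖ ^ 2 / 2) = 1 + α * (g p.1 + ‖p.2‖ ^ 2 / 2) := by ring
    have e3 : -(α * (g p.1 + ‖p.2‖ ^ 2 / 2) / 2) = -(α/2) * (g p.1 + ‖p.2‖ ^ 2 / 2) := by ring
    rw [e1, e2]
    calc (1 + α * (g p.1 + ‖p.2‖ ^ 2 / 2)) * Real.exp (-1 - α * (g p.1 + ‖p.2‖ ^ 2 / 2))
        ≤ 2 * Real.exp (-(α * (g p.1 + ‖p.2‖ ^ 2 / 2) / 2)) := aux_onept ht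
      _ = 2 * Real.exp (-(α/2) * (g p.1 + ‖p.2‖ ^ 2 / 2)) := by rw [e3]
  -- Conjunct 2
  have hmeasN : Measurable (fun p : EuclideanSpace ℝ (Fin d) × EuclideanSpace ℝ (Fin d) =>
      ρ p * max (-Real.log (ρ p)) 0) :=
    hρmeas.mul ((Real.measurable_log.comp hρmeas).neg.max measurable_const)
  have hexp1 : Integrable (fun p : EuclideanSpace ℝ (Fin d) × EuclideanSpace ℝ (Fin d) =>
      Real.exp (-1 - (g p.1 + ‖p.2‖ ^ 2 / 2))) := by
    refine ((hexp_int 1 one_pos).const_mul (Real.exp (-1))).congr ?_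
    filter_upwards with p
    rw [← Real.exp_add]; congr 1; ring
  have hNf : Integrable fun p : EuclideanSpace ℝ (Fin d) × EuclideanSpace ℝ (Fin d) =>
      ρ p * max (-Real.log (ρ p)) 0 := by
    refine (hmom.add hexp1).mono hmeasN.aestronglyMeasurable ?_
    filter_upwards with p
    simp only [Pi.add_apply]
    rw [Real.norm_of_nonneg (mul_nonneg (hρ0' p) (le_max_right _ _)),
      Real.norm_of_nonneg (add_nonneg (mul_nonneg (hm0 p) (hρ0' p)) (Real.exp_pos _).le)]
    exact aux_xlog (hρ0' p) (hm0 p)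
  -- entN as a real number
  set eN : ℝ := ∫ p, ρ p * max (-Real.log (ρ p)) 0 with heN_def
  have heN0 : 0 ≤ eN :=
    integral_nonneg fun p => mul_nonneg (hρ0' p) (le_max_right _ _)
  have hentN : entN ρ = ENNReal.ofReal eN :=
    (ofReal_integral_eq_lintegral_ofReal hNf
      (Filter.Eventually.of_forall fun p => mul_nonneg (hρ0' p) (le_max_right _ _))).symm
  have hNcoe : ((entN ρ : ℝ≥0∞) : EReal) = ((eN : ℝ) : EReal) := by
    rw [hentN, EReal.coe_ennreal_ofReal, max_eq_left heN0]
  -- integrability of the pieces of the first moment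
  have hGint : Integrable (fun p : EuclideanSpace ℝ (Fin d) × EuclideanSpace ℝ (Fin d) =>
      g p.1 * ρ p) := by
    refine hmom.mono ((hgmeas.comp measurable_fst).mul hρmeas).aestronglyMeasurable ?_
    filter_upwards with p
    rw [Real.norm_of_nonneg (mul_nonneg (hg0 p.1) (hρ0' p)),
      Real.norm_of_nonneg (mul_nonneg (hm0 p) (hρ0' p))]
    nlinarith [mul_nonneg (div_nonneg (sq_nonneg ‖p.2‖) (by norm_num : (0:ℝ) ≤ 2)) (hρ0' p)]
  have hKint : Integrable (fun p : EuclideanSpace ℝ (Fin d) × EuclideanSpace ℝ (Fin d) =>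
      (‖p.2‖ ^ 2 / 2) * ρ p) := by
    refine hmom.mono (Measurable.aestronglyMeasurable (by fun_prop)) ?_
    filter_upwards with p
    rw [Real.norm_of_nonneg (mul_nonneg (by positivity) (hρ0' p)),
      Real.norm_of_nonneg (mul_nonneg (hm0 p) (hρ0' p))]
    nlinarith [mul_nonneg (hg0 p.1) (hρ0' p)]
  have hsplit : (∫ p, (g p.1 + ‖p.2‖ ^ 2 / 2) * ρ p)
      = (∫ p, g p.1 * ρ p) + ∫ p, (‖p.2‖ ^ 2 / 2) * ρ p := by
    rw [← integral_add hGint hKint]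
    exact integral_congr_ae (Filter.Eventually.of_forall fun p => by ring)
  -- Fubini for the g-marginal term
  have hfub : (∫ θ, g θ * ∫ r, ρ (θ, r)) = ∫ p, g p.1 * ρ p := by
    have hGint' : Integrable
        (Function.uncurry fun θ r => g θ * ρ (θ, r))
        ((volume : Measure (EuclideanSpace ℝ (Fin d))).prod volume) := by
      rw [← Measure.volume_eq_prod]
      refine hGint.congr ?_
      filter_upwards with p
      simp [Function.uncurry]
    have h1 : (∫ θ, g θ * ∫ r, ρ (θ, r)) = ∫ θ, ∫ r, g θ * ρ (θ, r) := by
      simp_rw [integral_const_mul]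
    have h2 := integral_integral hGint'
    rw [h1, h2, ← Measure.volume_eq_prod]
  have hM0 : 0 ≤ ∫ p, (g p.1 + ‖p.2‖ ^ 2 / 2) * ρ p :=
    integral_nonneg fun p => mul_nonneg (hm0 p) (hρ0' p)
  have hG0 : 0 ≤ ∫ p, g p.1 * ρ p :=
    integral_nonneg fun p => mul_nonneg (hg0 p.1) (hρ0' p)
  have hK0 : 0 ≤ ∫ p, (‖p.2‖ ^ 2 / 2) * ρ p :=
    integral_nonneg fun p => mul_nonneg (by positivity) (hρ0' p)
  -- entropy lower-bound estimate
  have heN_le : ∀ α : ℝ, 0 < α → eN ≤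
      α * (∫ p : EuclideanSpace ℝ (Fin d) × EuclideanSpace ℝ (Fin d),
          (g p.1 + ‖p.2‖ ^ 2 / 2) * ρ p)
      + ∫ p : EuclideanSpace ℝ (Fin d) × EuclideanSpace ℝ (Fin d),
          (1 + α * g p.1 + α * (‖p.2‖ ^ 2 / 2)) *
          Real.exp (-1 - α * g p.1 - α * (‖p.2‖ ^ 2 / 2)) := by
    intro α hα
    have hint1 : Integrable (fun p : EuclideanSpace ℝ (Fin d) × EuclideanSpace ℝ (Fin d) =>
        Real.exp (-1 - α * g p.1 - α * (‖p.2‖ ^ 2 / 2))) := by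
      refine ((hexp_int α hα).const_mul (Real.exp (-1))).congr ?_
      filter_upwards with p
      rw [← Real.exp_add]; congr 1; ring
    have hint2 : Integrable (fun p : EuclideanSpace ℝ (Fin d) × EuclideanSpace ℝ (Fin d) =>
        α * ((g p.1 + ‖p.2‖ ^ 2 / 2) * ρ p)
          + Real.exp (-1 - α * g p.1 - α * (‖p.2‖ ^ 2 / 2))) := (hmom.const_mul α).add hint1
    have step1 : eN ≤ ∫ p, (α * ((g p.1 + ‖p.2‖ ^ 2 / 2) * ρ p)
        + Real.exp (-1 - α * g p.1 - α * (‖p.2‖ ^ 2 / 2))) := by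
      refine integral_mono hNf hint2 fun p => ?_
      have h1 := aux_xlog (hρ0' p) (mul_nonneg hα.le (hm0 p))
      have e1 : -1 - α * (g p.1 + ‖p.2‖ ^ 2 / 2)
          = -1 - α * g p.1 - α * (‖p.2‖ ^ 2 / 2) := by ring
      rw [e1] at h1
      calc ρ p * max (-Real.log (ρ p)) 0
          ≤ α * (g p.1 + ‖p.2‖ ^ 2 / 2) * ρ p
            + Real.exp (-1 - α * g p.1 - α * (‖p.2‖ ^ 2 / 2)) := h1
        _ = α * ((g p.1 + ‖p.2‖ ^ 2 / 2) * ρ p)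
            + Real.exp (-1 - α * g p.1 - α * (‖p.2‖ ^ 2 / 2)) := by ring
    have step2 : (∫ p : EuclideanSpace ℝ (Fin d) × EuclideanSpace ℝ (Fin d),
        (α * ((g p.1 + ‖p.2‖ ^ 2 / 2) * ρ p)
        + Real.exp (-1 - α * g p.1 - α * (‖p.2‖ ^ 2 / 2))))
        = α * (∫ p : EuclideanSpace ℝ (Fin d) × EuclideanSpace ℝ (Fin d),
            (g p.1 + ‖p.2‖ ^ 2 / 2) * ρ p)
          + ∫ p : EuclideanSpace ℝ (Fin d) × EuclideanSpace ℝ (Fin d),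
            Real.exp (-1 - α * g p.1 - α * (‖p.2‖ ^ 2 / 2)) := by
      rw [integral_add (hmom.const_mul α) hint1, integral_const_mul]
    have step3 : (∫ p : EuclideanSpace ℝ (Fin d) × EuclideanSpace ℝ (Fin d),
          Real.exp (-1 - α * g p.1 - α * (‖p.2‖ ^ 2 / 2)))
        ≤ ∫ p : EuclideanSpace ℝ (Fin d) × EuclideanSpace ℝ (Fin d),
            (1 + α * g p.1 + α * (‖p.2‖ ^ 2 / 2)) *
            Real.exp (-1 - α * g p.1 - α * (‖p.2‖ ^ 2 / 2)) := by
      refine integral_mono hint1 (hC1 α hα) fun p => ?_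
      have ht : 0 ≤ α * g p.1 + α * (‖p.2‖ ^ 2 / 2) :=
        add_nonneg (mul_nonneg hα.le (hg0 p.1)) (mul_nonneg hα.le (by positivity))
      nlinarith [mul_nonneg ht (Real.exp_pos (-1 - α * g p.1 - α * (‖p.2‖ ^ 2 / 2))).le]
    rw [step2] at step1
    linarith
  -- fEnergy representations
  have hβi : (0:ℝ) < β⁻¹ := inv_pos.mpr hβ
  have hfE_top : entP ρ = ⊤ → fEnergy R Ψ g β ρ = ⊤ := by
    intro h
    unfold fEnergy
    rw [h, hNcoe, EReal.coe_ennreal_top, EReal.coe_mul_top_of_pos hβi,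
      EReal.coe_add_top, ← EReal.coe_mul, EReal.top_sub_coe]
  have hfE_fin : entP ρ ≠ ⊤ → fEnergy R Ψ g β ρ =
      (((R (∫ θ, (∫ r, ρ (θ, r)) • Ψ θ) + (∫ θ, g θ * ∫ r, ρ (θ, r))
          + ∫ p, (‖p.2‖ ^ 2 / 2) * ρ p)
        + β⁻¹ * (entP ρ).toReal - β⁻¹ * eN : ℝ) : EReal) := by
    intro h
    have hPcoe : ((entP ρ : ℝ≥0∞) : EReal) = (((entP ρ).toReal : ℝ) : EReal) := by
      conv_lhs => rw [← ENNReal.ofReal_toReal h]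
      rw [EReal.coe_ennreal_ofReal, max_eq_left ENNReal.toReal_nonneg]
    unfold fEnergy
    rw [hNcoe, hPcoe, ← EReal.coe_mul, ← EReal.coe_mul, ← EReal.coe_add, ← EReal.coe_sub]
  refine ⟨hC1, hNf, ?_, ?_, ?_⟩
  · rcases eq_or_ne (entP ρ) ⊤ with h | h
    · rw [hfE_top h]; simp
    · rw [hfE_fin h]; exact EReal.coe_ne_bot _
  · intro α hα hαβ
    rcases eq_or_ne (entP ρ) ⊤ with h | h
    · rw [hfE_top h, EReal.top_add_coe]; exact le_top
    · have hPcoe : ((entP ρ : ℝ≥0∞) : EReal) = (((entP ρ).toReal : ℝ) : EReal) := by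
        conv_lhs => rw [← ENNReal.ofReal_toReal h]
        rw [EReal.coe_ennreal_ofReal, max_eq_left ENNReal.toReal_nonneg]
      rw [hfE_fin h, hPcoe, ← EReal.coe_mul, ← EReal.coe_add, ← EReal.coe_add,
        EReal.coe_le_coe_iff]
      have heN' := heN_le α hα
      have hmul := mul_le_mul_of_nonneg_left heN' (le_of_lt hβi)
      rw [div_eq_mul_inv, div_eq_mul_inv]
      nlinarith [hmul, hβi, ENNReal.toReal_nonneg (a := entP ρ), hsplit, hfub, hM0]
  · intro α hα hαβ
    rcases eq_or_ne (entP ρ) ⊤ with h | h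
    · rw [hfE_top h]; exact le_top
    · rw [hfE_fin h, EReal.coe_le_coe_iff]
      have heN' := heN_le α hα
      rw [hsplit] at heN'
      have hmul := mul_le_mul_of_nonneg_left heN' (le_of_lt hβi)
      have hαβ1 : α * β⁻¹ ≤ 1 := by
        calc α * β⁻¹ ≤ β * β⁻¹ := mul_le_mul_of_nonneg_right hαβ (le_of_lt hβi)
          _ = 1 := mul_inv_cancel₀ (ne_of_gt hβ)
      have hKα' := mul_le_of_le_one_left hK0 hαβ1
      rw [hfub, div_eq_mul_inv, div_eq_mul_inv]
      nlinarith [hmul, hβi, ENNReal.toReal_nonneg (a := entP ρ), hG0, hK0, hKα',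
        mul_nonneg (mul_nonneg hα.le (le_of_lt hβi)) hG0]
end

section
/- Assume (A4) and let β > 0. Let η* be a probability density on ℝ^d satisfying η*(θ) = exp(−βF'(η*)(θ))/Z₂(η*) for almost every θ, where Z₂(η*) := ∫exp(−βF'(η*)(θ))dθ, and define ρ*(θ,r) := (exp(−β|r|²/2)/Z₁)·η*(θ) with Z₁ := ∫exp(−β|r|²/2)dr. Then E(ρ*) is finite, and for every probability density ρ on ℝ^d × ℝ^d with ∫∫(g(θ)+|r|²/2)ρ dθdr < ∞ and Ψ Bochner integrable with respect to [ρ]^θ(θ)dθ (so that E(ρ) is well-defined in (−∞,∞]), one has E(ρ) ≥ E(ρ*). (Lemma D.1: the stationary density is the global minimizer of the free energy.) -/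
open MeasureTheory Real
open scoped RealInnerProductSpace ENNReal

-- Gaussian integrability in EuclideanSpace
lemma aux_gauss_int {d : ℕ} {b : ℝ} (hb : 0 < b) :
    Integrable fun r : EuclideanSpace ℝ (Fin d) => Real.exp (-b * ‖r‖ ^ 2) := by
  have h := (GaussianFourier.integrable_cexp_neg_mul_sq_norm_add
    (V := EuclideanSpace ℝ (Fin d)) (b := (b : ℂ)) (by simpa using hb) 0 0).norm
  refine h.congr ?_
  filter_upwards with r
  rw [Complex.norm_exp]
  norm_num
  left
  norm_cast

-- moment bound: x ≤ (2/b) exp((b/2)x) for x ≥ 0... we only need the final integrability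
lemma aux_gauss_mom_int {d : ℕ} {b : ℝ} (hb : 0 < b) :
    Integrable fun r : EuclideanSpace ℝ (Fin d) => ‖r‖ ^ 2 * Real.exp (-b * ‖r‖ ^ 2) := by
  have key : ∀ r : EuclideanSpace ℝ (Fin d),
      ‖r‖ ^ 2 * Real.exp (-b * ‖r‖ ^ 2) ≤ (2 / b) * Real.exp (-(b / 2) * ‖r‖ ^ 2) := by
    intro r
    have h1 : (b / 2) * ‖r‖ ^ 2 ≤ Real.exp ((b / 2) * ‖r‖ ^ 2) :=
      le_trans (by linarith [Real.add_one_le_exp ((b / 2) * ‖r‖ ^ 2)])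
        (le_refl _) |>.trans (le_refl _)
    have h2 : ‖r‖ ^ 2 ≤ (2 / b) * Real.exp ((b / 2) * ‖r‖ ^ 2) := by
      rw [div_mul_eq_mul_div, le_div_iff₀ hb]
      nlinarith
    calc ‖r‖ ^ 2 * Real.exp (-b * ‖r‖ ^ 2)
        ≤ ((2 / b) * Real.exp ((b / 2) * ‖r‖ ^ 2)) * Real.exp (-b * ‖r‖ ^ 2) := by
          exact mul_le_mul_of_nonneg_right h2 (Real.exp_pos _).le
      _ = (2 / b) * Real.exp (-(b / 2) * ‖r‖ ^ 2) := by
          rw [mul_assoc, ← Real.exp_add]; ring_nf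
  refine Integrable.mono ((aux_gauss_int (d := d) (b := b / 2) (by positivity)).const_mul (2 / b))
    ?_ ?_
  · exact ((continuous_norm.pow 2).mul ((continuous_const.mul (continuous_norm.pow 2)).rexp)).aestronglyMeasurable
  · filter_upwards with r
    have h0 : 0 ≤ ‖r‖ ^ 2 * Real.exp (-b * ‖r‖ ^ 2) := by positivity
    rw [Real.norm_eq_abs, Real.norm_eq_abs, abs_of_nonneg h0, abs_of_nonneg (by positivity)]
    simpa [neg_mul] using key r

-- log comparison: x - y ≤ x log x - x log y for x ≥ 0, y > 0
lemma aux_log_cmp {x y : ℝ} (hx : 0 ≤ x) (hy : 0 < y) :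
    x - y ≤ x * Real.log x - x * Real.log y := by
  rcases eq_or_lt_of_le hx with h | hx
  · simp [← h, hy.le]
  · have h1 : Real.log (y / x) ≤ y / x - 1 := Real.log_le_sub_one_of_pos (by positivity)
    have h2 : Real.log (y / x) = Real.log y - Real.log x := Real.log_div hy.ne' hx.ne'
    rw [h2] at h1
    have := mul_le_mul_of_nonneg_left h1 hx.le
    have hxx : x * (y / x) = y := by field_simp
    nlinarith

-- negative entropy part bound: x max(-log x) 0 ≤ exp(-(V+1)) + x V  for x ≥ 0, V ≥ 0
lemma aux_entN_bound {x V : ℝ} (hx : 0 ≤ x) (hV : 0 ≤ V) :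
    x * max (-Real.log x) 0 ≤ Real.exp (-(V + 1)) + x * V := by
  rcases eq_or_lt_of_le hx with h | hx
  · simp [← h]; positivity
  rcases le_or_gt 1 x with h1 | h1
  · have : max (-Real.log x) 0 = 0 := max_eq_right (by simpa using Real.log_nonneg h1)
    rw [this, mul_zero]; positivity
  · have hlx : Real.log x < 0 := Real.log_neg hx h1
    rw [max_eq_left (by linarith)]
    -- -x log x = x log(exp(-V)/x) + x V ≤ exp(-V)/e + xV
    have key : x * Real.log (Real.exp (-V) / x) ≤ Real.exp (-V) / Real.exp 1 := by
      have h2 : Real.log (Real.exp (-V) / (x * Real.exp 1)) ≤ Real.exp (-V) / (x * Real.exp 1) - 1 :=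
        Real.log_le_sub_one_of_pos (by positivity)
      have h3 : Real.log (Real.exp (-V) / (x * Real.exp 1)) =
          Real.log (Real.exp (-V) / x) - 1 := by
        rw [show Real.exp (-V) / (x * Real.exp 1) = (Real.exp (-V) / x) / Real.exp 1 by ring,
          Real.log_div (by positivity) (Real.exp_ne_zero 1), Real.log_exp]
      rw [h3] at h2
      have := mul_le_mul_of_nonneg_left h2 hx.le
      have hxx : x * (Real.exp (-V) / (x * Real.exp 1) - 1) =
          Real.exp (-V) / Real.exp 1 - x := by field_simp
      nlinarith
    have h4 : Real.log (Real.exp (-V) / x) = -V - Real.log x :=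
      by rw [Real.log_div (Real.exp_ne_zero _) hx.ne', Real.log_exp]
    rw [h4] at key
    have h5 : Real.exp (-(V + 1)) = Real.exp (-V) / Real.exp 1 := by
      rw [← Real.exp_sub]; ring_nf
    nlinarith


lemma aux_mul_max_log {x : ℝ} (hx : 0 ≤ x) :
    x * max (Real.log x) 0 = max (x * Real.log x) 0 := by
  rcases le_total (Real.log x) 0 with h | h
  · rw [max_eq_right h, max_eq_right (by nlinarith), mul_zero]
  · rw [max_eq_left h, max_eq_left (by positivity)]

lemma aux_mul_max_neg_log {x : ℝ} (hx : 0 ≤ x) :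
    x * max (-Real.log x) 0 = max (-(x * Real.log x)) 0 := by
  rcases le_total (Real.log x) 0 with h | h
  · rw [max_eq_left (by simpa using h), max_eq_left (by nlinarith)]; ring
  · rw [max_eq_right (by simpa using h), max_eq_right (by nlinarith), mul_zero]

lemma aux_ofReal_max (x : ℝ) : ENNReal.ofReal (max x 0) = ENNReal.ofReal x := by
  rcases le_total x 0 with h | h
  · rw [max_eq_right h, ENNReal.ofReal_zero, ENNReal.ofReal_eq_zero.2 h]
  · rw [max_eq_left h]

-- entP/entN as lintegrals of pos/neg part of φ = ρ log ρ
lemma aux_entP_eq {d : ℕ} {ρ : EuclideanSpace ℝ (Fin d) × EuclideanSpace ℝ (Fin d) → ℝ}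
    (hρ0 : 0 ≤ ρ) : entP ρ = ∫⁻ p, ENNReal.ofReal (ρ p * Real.log (ρ p)) := by
  unfold entP
  congr 1 with p
  rw [aux_mul_max_log (hρ0 p), aux_ofReal_max]

lemma aux_entN_eq {d : ℕ} {ρ : EuclideanSpace ℝ (Fin d) × EuclideanSpace ℝ (Fin d) → ℝ}
    (hρ0 : 0 ≤ ρ) : entN ρ = ∫⁻ p, ENNReal.ofReal (-(ρ p * Real.log (ρ p))) := by
  unfold entN
  congr 1 with p
  rw [aux_mul_max_neg_log (hρ0 p), aux_ofReal_max]

-- L7 : from integrability of φ, finiteness and value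
lemma aux_ent_finite {d : ℕ} {ρ : EuclideanSpace ℝ (Fin d) × EuclideanSpace ℝ (Fin d) → ℝ}
    (hρ0 : 0 ≤ ρ) (hφ : Integrable fun p => ρ p * Real.log (ρ p)) :
    entP ρ ≠ ⊤ ∧ entN ρ ≠ ⊤ ∧
      (entP ρ).toReal - (entN ρ).toReal = ∫ p, ρ p * Real.log (ρ p) := by
  have hP := aux_entP_eq hρ0
  have hN := aux_entN_eq hρ0
  have h1 : entP ρ ≠ ⊤ := by
    rw [hP]
    refine ne_top_of_le_ne_top hφ.2.ne ?_
    refine lintegral_mono fun p => ?_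
    rw [← ofReal_norm_eq_enorm]
    exact ENNReal.ofReal_le_ofReal (le_abs_self _)
  have h2 : entN ρ ≠ ⊤ := by
    rw [hN]
    refine ne_top_of_le_ne_top hφ.2.ne ?_
    refine lintegral_mono fun p => ?_
    rw [← ofReal_norm_eq_enorm]
    exact ENNReal.ofReal_le_ofReal (by rw [Real.norm_eq_abs]; exact neg_le_abs _)
  refine ⟨h1, h2, ?_⟩
  rw [hP, hN, ← integral_eq_lintegral_pos_part_sub_lintegral_neg_part hφ]

-- L8 : converse, integrability from finiteness
lemma aux_ent_integrable {d : ℕ} {ρ : EuclideanSpace ℝ (Fin d) × EuclideanSpace ℝ (Fin d) → ℝ}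
    (hρm : Measurable ρ) (hρ0 : 0 ≤ ρ) (hP : entP ρ ≠ ⊤) (hN : entN ρ ≠ ⊤) :
    Integrable fun p => ρ p * Real.log (ρ p) := by
  have hm : Measurable fun p => ρ p * Real.log (ρ p) :=
    hρm.mul (Real.measurable_log.comp hρm)
  refine ⟨hm.aestronglyMeasurable, ?_⟩
  rw [HasFiniteIntegral]
  have key : ∀ p, ‖ρ p * Real.log (ρ p)‖ₑ =
      ENNReal.ofReal (ρ p * Real.log (ρ p)) + ENNReal.ofReal (-(ρ p * Real.log (ρ p))) := by
    intro p
    rw [← ofReal_norm_eq_enorm, Real.norm_eq_abs]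
    rcases le_total (ρ p * Real.log (ρ p)) 0 with h | h
    · rw [abs_of_nonpos h, ENNReal.ofReal_eq_zero.2 h, zero_add]
    · have : ENNReal.ofReal (-(ρ p * Real.log (ρ p))) = 0 :=
        ENNReal.ofReal_eq_zero.2 (neg_nonpos.2 h)
      rw [abs_of_nonneg h, this, add_zero]
  simp_rw [key]
  rw [lintegral_add_left (by measurability)]
  rw [← aux_entP_eq hρ0, ← aux_entN_eq hρ0]
  exact ENNReal.add_lt_top.2 ⟨hP.lt_top, hN.lt_top⟩

-- EReal finite-case rewriting
lemma aux_ereal_coe_toReal {p : ℝ≥0∞} (hp : p ≠ ⊤) :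
    (p : EReal) = ((p.toReal : ℝ) : EReal) := by
  rw [← ENNReal.ofReal_toReal hp, EReal.coe_ennreal_ofReal,
    max_eq_left ENNReal.toReal_nonneg, ENNReal.toReal_ofReal ENNReal.toReal_nonneg]

lemma aux_ereal_fin {A c : ℝ} {p n : ℝ≥0∞} (hp : p ≠ ⊤) (hn : n ≠ ⊤) :
    (A : EReal) + (c : EReal) * (p : EReal) - (c : EReal) * (n : EReal)
      = ((A + c * p.toReal - c * n.toReal : ℝ) : EReal) := by
  rw [aux_ereal_coe_toReal hp, aux_ereal_coe_toReal hn]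
  norm_cast

lemma aux_ereal_top {A c : ℝ} (hc : 0 < c) {n : ℝ≥0∞} (hn : n ≠ ⊤) :
    (A : EReal) + (c : EReal) * (⊤ : ℝ≥0∞) - (c : EReal) * (n : EReal) = ⊤ := by
  rw [aux_ereal_coe_toReal hn]
  rw [EReal.coe_ennreal_top]
  rw [EReal.mul_top_of_pos (by exact_mod_cast hc)]
  have h1 : (A : EReal) + ⊤ = ⊤ := EReal.add_top_of_ne_bot (by simp)
  rw [h1]
  have h2 : ((c : EReal)) * ((n.toReal : ℝ) : EReal) = (((c * n.toReal : ℝ)) : EReal) := by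
    norm_cast
  rw [h2]
  rfl

-- convexity gradient inequality
lemma aux_convex_grad {F : Type*} [NormedAddCommGroup F] [InnerProductSpace ℝ F]
    [CompleteSpace F] {R : F → ℝ} (hRconv : ConvexOn ℝ Set.univ R)
    {gradR : F → F} (hgradR : ∀ ψ, HasGradientAt R (gradR ψ) ψ) (x y : F) :
    R x + ⟪gradR x, y - x⟫ ≤ R y := by
  rcases eq_or_ne x y with rfl | hxy
  · simp
  · set c : ℝ → F := fun t => t • (y - x) + x with hc
    have hφconv : ConvexOn ℝ Set.univ (R ∘ c) := by
      have := hRconv.comp_affineMap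
        (AffineMap.mk (fun t : ℝ => t • (y - x) + x)
          { toFun := fun t : ℝ => t • (y - x)
            map_add' := fun a b => add_smul a b _
            map_smul' := fun a b => smul_assoc a b _ }
          (fun p v => by simp [add_smul]; abel))
      simpa using this
    have hder : HasDerivAt (R ∘ c) ⟪gradR x, y - x⟫ 0 := by
      have hcd : HasDerivAt c (y - x) 0 := by
        simpa [hc] using ((hasDerivAt_id (0:ℝ)).smul_const (y - x)).add_const x
      have := (hgradR (c 0)).hasFDerivAt.comp_hasDerivAt 0 hcd
      have hc0 : c 0 = x := by simp [hc]
      rw [hc0] at this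
      simpa [InnerProductSpace.toDual_apply_apply] using this
    have hs := hφconv.le_slope_of_hasDerivAt (Set.mem_univ (0:ℝ)) (Set.mem_univ 1)
      zero_lt_one hder
    rw [slope_def_field] at hs
    have h0 : (R ∘ c) 0 = R x := by simp [hc]
    have h1 : (R ∘ c) 1 = R y := by simp [hc]
    rw [h0, h1] at hs
    simp at hs
    linarith

-- positivity of integrals of positive integrable functions on volume
lemma aux_integral_pos {d : ℕ} {f : EuclideanSpace ℝ (Fin d) → ℝ}
    (hf : Integrable f) (hpos : ∀ x, 0 < f x) : 0 < ∫ x, f x := by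
  rw [integral_pos_iff_support_of_nonneg (fun x => (hpos x).le) hf]
  have : Function.support f = Set.univ := by
    ext x; simp [(hpos x).ne']
  rw [this]
  simpa using (NeZero.ne (volume : Measure (EuclideanSpace ℝ (Fin d))))

set_option maxHeartbeats 1000000 in
/-- Lemma D.1: assume (A4) and `β > 0`.  If `η*` is a probability
density solving the Boltzmann fixed point equation and
`ρ*(θ,r) = (exp(−β|r|²/2)/Z₁)η*(θ)`, then `E(ρ*)` is finite and `E(ρ) ≥ E(ρ*)` for
every probability density `ρ` on `ℝ^d × ℝ^d` with `∫∫(g+|r|²/2)ρ < ∞` and `Ψ`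
Bochner integrable against its `θ`-marginal. -/
theorem stmt_7 {d : ℕ} {F : Type*} [NormedAddCommGroup F] [InnerProductSpace ℝ F]
    [CompleteSpace F]
    (R : F → ℝ) (hR0 : ∀ ψ, 0 ≤ R ψ) (hRconv : ConvexOn ℝ Set.univ R)
    (gradR : F → F) (hgradR : ∀ ψ, HasGradientAt R (gradR ψ) ψ)
    (Ψ : EuclideanSpace ℝ (Fin d) → F)
    (g : EuclideanSpace ℝ (Fin d) → ℝ) (hg0 : ∀ θ, 0 ≤ g θ)
    -- (A4)
    (hA4int : ∀ ρ : EuclideanSpace ℝ (Fin d) → ℝ,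
      Integrable ρ → 0 ≤ ρ → (∫ θ, ρ θ) ≤ 1 → Integrable fun θ => ρ θ • Ψ θ)
    (M₀ : ℝ)
    (hA4bdd : ∀ ρ : EuclideanSpace ℝ (Fin d) → ℝ,
      Integrable ρ → 0 ≤ ρ → (∫ θ, ρ θ) ≤ 1 →
        ∀ θ, |⟪gradR (∫ t, ρ t • Ψ t), Ψ θ⟫| ≤ M₀)
    (hA4equi : ∀ ε : ℝ, 0 < ε → ∃ δ : ℝ, 0 < δ ∧
      ∀ ρ : EuclideanSpace ℝ (Fin d) → ℝ,
        Integrable ρ → 0 ≤ ρ → (∫ θ, ρ θ) ≤ 1 →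
          ∀ θ θ' : EuclideanSpace ℝ (Fin d), dist θ θ' < δ →
            |⟪gradR (∫ t, ρ t • Ψ t), Ψ θ⟫ - ⟪gradR (∫ t, ρ t • Ψ t), Ψ θ'⟫| < ε)
    (hgdiff : Differentiable ℝ g)
    (hgconf : Filter.Tendsto g (Filter.cocompact (EuclideanSpace ℝ (Fin d))) Filter.atTop)
    (hgexp : ∀ b : ℝ, 0 < b → Integrable fun θ => Real.exp (-b * g θ))
    (β : ℝ) (hβ : 0 < β)
    (ηs : EuclideanSpace ℝ (Fin d) → ℝ)
    (hηmeas : Measurable ηs) (hη0 : 0 ≤ ηs) (hηint : Integrable ηs)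
    (hη1 : (∫ θ, ηs θ) = 1)
    (hfix : ∀ᵐ θ ∂(volume : Measure (EuclideanSpace ℝ (Fin d))),
      ηs θ = Real.exp (-β * (⟪gradR (∫ t, ηs t • Ψ t), Ψ θ⟫ + g θ)) /
        ∫ θ', Real.exp (-β * (⟪gradR (∫ t, ηs t • Ψ t), Ψ θ'⟫ + g θ'))) :
    let ρs : EuclideanSpace ℝ (Fin d) × EuclideanSpace ℝ (Fin d) → ℝ :=
      fun p => (Real.exp (-β * ‖p.2‖ ^ 2 / 2) /
        ∫ r : EuclideanSpace ℝ (Fin d), Real.exp (-β * ‖r‖ ^ 2 / 2)) * ηs p.1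
    fEnergy R Ψ g β ρs ≠ ⊤ ∧ fEnergy R Ψ g β ρs ≠ ⊥ ∧
    ∀ ρ : EuclideanSpace ℝ (Fin d) × EuclideanSpace ℝ (Fin d) → ℝ,
      Measurable ρ → 0 ≤ ρ → Integrable ρ → (∫ p, ρ p) = 1 →
      (Integrable fun p : EuclideanSpace ℝ (Fin d) × EuclideanSpace ℝ (Fin d) =>
        (g p.1 + ‖p.2‖ ^ 2 / 2) * ρ p) →
      (Integrable fun θ => (∫ r, ρ (θ, r)) • Ψ θ) →
      fEnergy R Ψ g β ρs ≤ fEnergy R Ψ g β ρ := by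
  intro ρs
  have hρs_def : ∀ p : EuclideanSpace ℝ (Fin d) × EuclideanSpace ℝ (Fin d),
      ρs p = Real.exp (-β * ‖p.2‖ ^ 2 / 2) /
        (∫ r : EuclideanSpace ℝ (Fin d), Real.exp (-β * ‖r‖ ^ 2 / 2)) * ηs p.1 :=
    fun p => rfl
  clear_value ρs
  have hβinv : (0:ℝ) < β⁻¹ := inv_pos.2 hβ
  set w : F := gradR (∫ t, ηs t • Ψ t) with hw
  set h₀ : EuclideanSpace ℝ (Fin d) → ℝ := fun θ => ⟪w, Ψ θ⟫ with hh₀def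
  set Z₂ : ℝ := ∫ θ', Real.exp (-β * (h₀ θ' + g θ')) with hZ₂def
  set Z₁ : ℝ := ∫ r : EuclideanSpace ℝ (Fin d), Real.exp (-β * ‖r‖ ^ 2 / 2) with hZ₁def
  have hvol : (volume : Measure (EuclideanSpace ℝ (Fin d) × EuclideanSpace ℝ (Fin d)))
      = (volume : Measure (EuclideanSpace ℝ (Fin d))).prod volume := rfl
  -- basic facts about h₀
  have hh₀M : ∀ θ, |h₀ θ| ≤ M₀ := hA4bdd ηs hηint hη0 hη1.le
  have hM₀0 : 0 ≤ M₀ := le_trans (abs_nonneg _) (hh₀M 0)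
  have hh₀c : Continuous h₀ := by
    rw [Metric.continuous_iff]
    intro b ε hε
    obtain ⟨δ, hδ, hδ'⟩ := hA4equi ε hε
    exact ⟨δ, hδ, fun a ha => by
      rw [Real.dist_eq]; exact hδ' ηs hηint hη0 hη1.le a b ha⟩
  have hgc : Continuous g := hgdiff.continuous
  -- Gaussian facts
  have hG_int : Integrable fun r : EuclideanSpace ℝ (Fin d) =>
      Real.exp (-β * ‖r‖ ^ 2 / 2) := by
    refine (aux_gauss_int (d := d) (b := β / 2) (by positivity)).congr ?_
    filter_upwards with r; ring_nf
  have hZ₁pos : 0 < Z₁ := aux_integral_pos hG_int fun r => Real.exp_pos _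
  have hGmom : Integrable fun r : EuclideanSpace ℝ (Fin d) =>
      ‖r‖ ^ 2 * Real.exp (-β * ‖r‖ ^ 2 / 2) := by
    refine (aux_gauss_mom_int (d := d) (b := β / 2) (by positivity)).congr ?_
    filter_upwards with r; ring_nf
  -- fixed point facts
  have hEh_int : Integrable fun θ => Real.exp (-β * (h₀ θ + g θ)) := by
    refine ((hgexp β hβ).const_mul (Real.exp (β * M₀))).mono ?_ ?_
    · exact ((continuous_const.mul (hh₀c.add hgc)).rexp).aestronglyMeasurable
    · filter_upwards with θ
      rw [Real.norm_eq_abs, Real.norm_eq_abs, abs_of_nonneg (Real.exp_pos _).le,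
        abs_of_nonneg (by positivity), ← Real.exp_add]
      apply Real.exp_le_exp.2
      have := (abs_le.1 (hh₀M θ)).1
      nlinarith [hg0 θ]
  have hZ₂pos : 0 < Z₂ := aux_integral_pos hEh_int fun θ => Real.exp_pos _
  have hfix' : ∀ᵐ θ ∂(volume : Measure (EuclideanSpace ℝ (Fin d))),
      ηs θ = Real.exp (-β * (h₀ θ + g θ)) / Z₂ ∧ 0 < ηs θ := by
    filter_upwards [hfix] with θ hθ
    exact ⟨hθ, hθ ▸ by positivity⟩
  -- integrability of g against ηs
  have hgη : Integrable fun θ => g θ * ηs θ := by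
    have hbig : Integrable fun θ => (Real.exp (β * M₀) * (2 / β)) *
        Real.exp (-(β / 2) * g θ) / Z₂ := ((hgexp (β / 2) (by positivity)).const_mul
          (Real.exp (β * M₀) * (2 / β))).div_const Z₂
    refine hbig.mono ((hgc.measurable.mul hηmeas).aestronglyMeasurable) ?_
    filter_upwards [hfix'] with θ ⟨hθ, _⟩
    have hC : (0:ℝ) ≤ Real.exp (β * M₀) * (2 / β) :=
      mul_nonneg (Real.exp_pos _).le (div_nonneg (by norm_num) hβ.le)
    rw [Real.norm_eq_abs, Real.norm_eq_abs,
      abs_of_nonneg (mul_nonneg (hg0 θ) (hη0 θ)),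
      abs_of_nonneg (div_nonneg (mul_nonneg hC (Real.exp_pos _).le) hZ₂pos.le)]
    have key : g θ * Real.exp (-β * (h₀ θ + g θ)) ≤
        Real.exp (β * M₀) * (g θ * Real.exp (-β * g θ)) := by
      rw [show -β * (h₀ θ + g θ) = -β * h₀ θ + -β * g θ by ring, Real.exp_add, ← mul_assoc,
        mul_comm (g θ) _, mul_assoc]
      refine mul_le_mul_of_nonneg_right ?_ (mul_nonneg (hg0 θ) (Real.exp_pos _).le)
      apply Real.exp_le_exp.2
      have := (abs_le.1 (hh₀M θ)).1
      nlinarith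
    have key2 : g θ * Real.exp (-β * g θ) ≤ (2 / β) * Real.exp (-(β / 2) * g θ) := by
      have h1 : (β / 2) * g θ ≤ Real.exp ((β / 2) * g θ) := by
        linarith [Real.add_one_le_exp ((β / 2) * g θ)]
      have h2 : g θ ≤ (2 / β) * Real.exp ((β / 2) * g θ) := by
        rw [div_mul_eq_mul_div, le_div_iff₀ hβ]
        nlinarith
      calc g θ * Real.exp (-β * g θ)
          ≤ ((2 / β) * Real.exp ((β / 2) * g θ)) * Real.exp (-β * g θ) :=
            mul_le_mul_of_nonneg_right h2 (Real.exp_pos _).le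
        _ = (2 / β) * Real.exp (-(β / 2) * g θ) := by
            rw [mul_assoc, ← Real.exp_add]; ring_nf
    have hfrac : (0:ℝ) ≤ 1 / Z₂ := by positivity
    calc g θ * ηs θ
        = g θ * Real.exp (-β * (h₀ θ + g θ)) * (1 / Z₂) := by rw [hθ]; ring
      _ ≤ Real.exp (β * M₀) * (2 / β) * Real.exp (-(β / 2) * g θ) * (1 / Z₂) := by
          refine mul_le_mul_of_nonneg_right ?_ hfrac
          calc g θ * Real.exp (-β * (h₀ θ + g θ))
              ≤ Real.exp (β * M₀) * (g θ * Real.exp (-β * g θ)) := key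
            _ ≤ Real.exp (β * M₀) * ((2 / β) * Real.exp (-(β / 2) * g θ)) :=
                mul_le_mul_of_nonneg_left key2 (Real.exp_pos _).le
            _ = Real.exp (β * M₀) * (2 / β) * Real.exp (-(β / 2) * g θ) := by ring
      _ = Real.exp (β * M₀) * (2 / β) * Real.exp (-(β / 2) * g θ) / Z₂ := by ring
  -- measurability and positivity of ρs
  have hGc : Continuous fun r : EuclideanSpace ℝ (Fin d) => Real.exp (-β * ‖r‖ ^ 2 / 2) :=
    ((continuous_const.mul (continuous_norm.pow 2)).div_const 2).rexp
  have hρsm : Measurable ρs := by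
    have : ρs = fun p => Real.exp (-β * ‖p.2‖ ^ 2 / 2) / Z₁ * ηs p.1 := funext hρs_def
    rw [this]
    exact (((hGc.comp continuous_snd).measurable).div_const Z₁).mul (hηmeas.comp measurable_fst)
  have hρs0 : 0 ≤ ρs := fun p => by
    rw [hρs_def]; exact mul_nonneg (by positivity) (hη0 _)
  -- basic integrability of ρs and friends
  have hρs_int : Integrable ρs := by
    rw [hvol]
    refine (hηint.mul_prod (hG_int.div_const Z₁)).congr ?_
    filter_upwards with p; rw [hρs_def]; ring
  have hρs_int' : Integrable ρs ((volume : Measure (EuclideanSpace ℝ (Fin d))).prod volume) := by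
    rw [← hvol]; exact hρs_int
  have hmarg_s : ∀ θ, (∫ r, ρs (θ, r)) = ηs θ := by
    intro θ
    have : (fun r => ρs (θ, r)) =
        fun r : EuclideanSpace ℝ (Fin d) => Real.exp (-β * ‖r‖ ^ 2 / 2) / Z₁ * ηs θ :=
      funext fun r => hρs_def (θ, r)
    rw [this, integral_mul_const, integral_div, div_self hZ₁pos.ne', one_mul]
  have hρs1 : (∫ p, ρs p) = 1 := by
    rw [hvol, integral_prod _ hρs_int']
    simp_rw [hmarg_s]
    exact hη1
  -- Fubini helper
  have fubini_mul : ∀ q : EuclideanSpace ℝ (Fin d) → ℝ,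
      ∀ ρ' : EuclideanSpace ℝ (Fin d) × EuclideanSpace ℝ (Fin d) → ℝ,
      Integrable (fun p => q p.1 * ρ' p) →
      (∫ p, q p.1 * ρ' p) = ∫ θ, q θ * ∫ r, ρ' (θ, r) := by
    intro q ρ' hint
    rw [hvol] at hint
    rw [hvol, integral_prod _ hint]
    simp_rw [integral_const_mul]
  -- integrability of pieces against ρs
  have iK_s : Integrable fun p => (‖p.2‖ ^ 2 / 2) * ρs p := by
    rw [hvol]
    refine (hηint.mul_prod (hGmom.div_const (2 * Z₁))).congr ?_
    filter_upwards with p; rw [hρs_def]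
    field_simp
  have ig_s : Integrable fun p => g p.1 * ρs p := by
    rw [hvol]
    refine (hgη.mul_prod (hG_int.div_const Z₁)).congr ?_
    filter_upwards with p; rw [hρs_def]; ring
  have ih₀_s : Integrable fun p => h₀ p.1 * ρs p := by
    refine (hρs_int.const_mul M₀).mono'
      (((hh₀c.comp continuous_fst).measurable.mul hρsm).aestronglyMeasurable) ?_
    filter_upwards with p
    rw [Real.norm_eq_abs, abs_mul, abs_of_nonneg (hρs0 p)]
    exact mul_le_mul_of_nonneg_right (hh₀M p.1) (hρs0 p)
  -- the log of ρs, a.e.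
  have hfixP : ∀ᵐ p : EuclideanSpace ℝ (Fin d) × EuclideanSpace ℝ (Fin d) ∂volume,
      ηs p.1 = Real.exp (-β * (h₀ p.1 + g p.1)) / Z₂ ∧ 0 < ηs p.1 := by
    rw [hvol]
    exact MeasureTheory.Measure.quasiMeasurePreserving_fst.ae hfix'
  have hlogρs : ∀ᵐ p : EuclideanSpace ℝ (Fin d) × EuclideanSpace ℝ (Fin d) ∂volume,
      Real.log (ρs p) = -β * ‖p.2‖ ^ 2 / 2 - Real.log Z₁
        + (-β * (h₀ p.1 + g p.1) - Real.log Z₂) ∧ 0 < ρs p := by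
    filter_upwards [hfixP] with p ⟨hp, hppos⟩
    have hpos : 0 < ρs p := by
      rw [hρs_def]; exact mul_pos (by positivity) hppos
    refine ⟨?_, hpos⟩
    rw [hρs_def, Real.log_mul (by positivity) hppos.ne', Real.log_div (Real.exp_ne_zero _)
      hZ₁pos.ne', Real.log_exp, hp, Real.log_div (Real.exp_ne_zero _) hZ₂pos.ne', Real.log_exp]
  -- entropy of ρs : integrability and value
  have hφs_expl : ∀ᵐ p : EuclideanSpace ℝ (Fin d) × EuclideanSpace ℝ (Fin d) ∂volume,
      ρs p * Real.log (ρs p) = (-β) * ((‖p.2‖ ^ 2 / 2) * ρs p)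
        + (-Real.log Z₁ - Real.log Z₂) * ρs p
        + (-β) * (h₀ p.1 * ρs p) + (-β) * (g p.1 * ρs p) := by
    filter_upwards [hlogρs] with p ⟨hp, _⟩
    rw [hp]; ring
  have hφs_eq : (fun p => ρs p * Real.log (ρs p)) =ᶠ[ae volume]
      (fun p : EuclideanSpace ℝ (Fin d) × EuclideanSpace ℝ (Fin d) =>
        (-β) * ((‖p.2‖ ^ 2 / 2) * ρs p) + (-Real.log Z₁ - Real.log Z₂) * ρs p
        + (-β) * (h₀ p.1 * ρs p) + (-β) * (g p.1 * ρs p)) := hφs_expl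
  have iABC_s : Integrable (fun p : EuclideanSpace ℝ (Fin d) × EuclideanSpace ℝ (Fin d) =>
      (-β) * ((‖p.2‖ ^ 2 / 2) * ρs p) + (-Real.log Z₁ - Real.log Z₂) * ρs p
        + (-β) * (h₀ p.1 * ρs p)) :=
    ((iK_s.const_mul (-β)).add (hρs_int.const_mul (-Real.log Z₁ - Real.log Z₂))).add
      (ih₀_s.const_mul (-β))
  have iAB_s : Integrable (fun p : EuclideanSpace ℝ (Fin d) × EuclideanSpace ℝ (Fin d) =>
      (-β) * ((‖p.2‖ ^ 2 / 2) * ρs p) + (-Real.log Z₁ - Real.log Z₂) * ρs p) :=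
    (iK_s.const_mul (-β)).add (hρs_int.const_mul (-Real.log Z₁ - Real.log Z₂))
  have hφs_int : Integrable fun p => ρs p * Real.log (ρs p) :=
    Integrable.congr (iABC_s.add (ig_s.const_mul (-β))) hφs_eq.symm
  have hh₀F_s : (∫ p, h₀ p.1 * ρs p) = ∫ θ, h₀ θ * ηs θ := by
    rw [fubini_mul h₀ ρs ih₀_s]; simp_rw [hmarg_s]
  have hgF_s : (∫ p, g p.1 * ρs p) = ∫ θ, g θ * ηs θ := by
    rw [fubini_mul g ρs ig_s]; simp_rw [hmarg_s]
  have hφs_val : (∫ p, ρs p * Real.log (ρs p)) =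
      (-β) * (∫ p, (‖p.2‖ ^ 2 / 2) * ρs p) + (-Real.log Z₁ - Real.log Z₂)
        + (-β) * (∫ θ, h₀ θ * ηs θ) + (-β) * (∫ θ, g θ * ηs θ) := by
    rw [integral_congr_ae hφs_eq,
      integral_add iABC_s (ig_s.const_mul (-β)),
      integral_add iAB_s (ih₀_s.const_mul (-β)),
      integral_add (iK_s.const_mul (-β)) (hρs_int.const_mul (-Real.log Z₁ - Real.log Z₂)),
      integral_const_mul, integral_const_mul, integral_const_mul, integral_const_mul,
      hρs1, hh₀F_s, hgF_s]
    ring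
  -- finite form of fEnergy ρs
  have hEntS := aux_ent_finite hρs0 hφs_int
  have hfin_s : fEnergy R Ψ g β ρs =
      (((R (∫ θ, ηs θ • Ψ θ) - (∫ θ, h₀ θ * ηs θ)
        - β⁻¹ * Real.log Z₁ - β⁻¹ * Real.log Z₂ : ℝ)) : EReal) := by
    unfold fEnergy
    rw [aux_ereal_fin hEntS.1 hEntS.2.1]
    congr 1
    have e1 : (∫ θ, (∫ r, ρs (θ, r)) • Ψ θ) = ∫ θ, ηs θ • Ψ θ := by simp_rw [hmarg_s]
    have e2 : (∫ θ, g θ * ∫ r, ρs (θ, r)) = ∫ θ, g θ * ηs θ := by simp_rw [hmarg_s]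
    rw [e1, e2]
    have e3 := hEntS.2.2
    rw [hφs_val] at e3
    have hβne : β ≠ 0 := hβ.ne'
    field_simp at e3 ⊢
    linarith
  refine ⟨by rw [hfin_s]; exact EReal.coe_ne_top _, by rw [hfin_s]; exact EReal.coe_ne_bot _, ?_⟩
  -- main inequality
  intro ρ hρm hρ0 hρint hρ1 hgk hΨρ
  have hρint' : Integrable ρ ((volume : Measure (EuclideanSpace ℝ (Fin d))).prod volume) := by
    rw [← hvol]; exact hρint
  have hm1 : (∫ θ, ∫ r, ρ (θ, r)) = 1 := by
    rw [← hρ1, hvol, integral_prod _ hρint']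
  -- integrable pieces against ρ
  have ik : Integrable fun p : EuclideanSpace ℝ (Fin d) × EuclideanSpace ℝ (Fin d) =>
      (‖p.2‖ ^ 2 / 2) * ρ p := by
    refine hgk.mono' ((((continuous_norm.comp continuous_snd).pow 2).div_const
      2).measurable.mul hρm).aestronglyMeasurable ?_
    filter_upwards with p
    rw [Real.norm_eq_abs, abs_of_nonneg (mul_nonneg (by positivity) (hρ0 p))]
    have h1 : (0:ℝ) ≤ g p.1 := hg0 _
    have h2 : (0:ℝ) ≤ g p.1 * ρ p := mul_nonneg h1 (hρ0 p)
    nlinarith [h2]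
  have igρ : Integrable fun p : EuclideanSpace ℝ (Fin d) × EuclideanSpace ℝ (Fin d) =>
      g p.1 * ρ p := by
    refine hgk.mono' ((hgc.comp continuous_fst).measurable.mul hρm).aestronglyMeasurable ?_
    filter_upwards with p
    rw [Real.norm_eq_abs, abs_of_nonneg (mul_nonneg (hg0 _) (hρ0 p))]
    have h2 : (0:ℝ) ≤ ‖p.2‖ ^ 2 / 2 * ρ p := mul_nonneg (by positivity) (hρ0 p)
    nlinarith [h2]
  have ih₀ρ : Integrable fun p : EuclideanSpace ℝ (Fin d) × EuclideanSpace ℝ (Fin d) =>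
      h₀ p.1 * ρ p := by
    refine (hρint.const_mul M₀).mono'
      ((hh₀c.comp continuous_fst).measurable.mul hρm).aestronglyMeasurable ?_
    filter_upwards with p
    rw [Real.norm_eq_abs, abs_mul, abs_of_nonneg (hρ0 p)]
    exact mul_le_mul_of_nonneg_right (hh₀M p.1) (hρ0 p)
  -- entN ρ is finite
  have hNtop : entN ρ ≠ ⊤ := by
    have ibnd : Integrable (fun p : EuclideanSpace ℝ (Fin d) × EuclideanSpace ℝ (Fin d) =>
        Real.exp (-(g p.1 + ‖p.2‖ ^ 2 / 2 + 1)) + ρ p * (g p.1 + ‖p.2‖ ^ 2 / 2)) := by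
      refine Integrable.add ?_ (hgk.congr ?_)
      · rw [hvol]
        refine ((hgexp 1 one_pos).mul_prod ((aux_gauss_int (d := d) (b := 1/2)
          (by norm_num)).const_mul (Real.exp (-1)))).congr ?_
        filter_upwards with p
        rw [← Real.exp_add, ← Real.exp_add]
        congr 1; ring
      · filter_upwards with p; ring
    refine ne_top_of_le_ne_top ibnd.2.ne ?_
    unfold entN
    refine lintegral_mono fun p => ?_
    refine (ENNReal.ofReal_le_ofReal (aux_entN_bound (x := ρ p)
      (V := g p.1 + ‖p.2‖ ^ 2 / 2) (hρ0 p)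
      (add_nonneg (hg0 p.1) (by positivity)))).trans ?_
    rw [← ofReal_norm_eq_enorm]
    exact ENNReal.ofReal_le_ofReal (le_abs_self _)
  by_cases hPtop : entP ρ = ⊤
  · have htop : fEnergy R Ψ g β ρ = ⊤ := by
      unfold fEnergy
      rw [hPtop]
      exact aux_ereal_top hβinv hNtop
    rw [htop]; exact le_top
  have hφρ_int := aux_ent_integrable hρm hρ0 hPtop hNtop
  have hEnt := aux_ent_finite hρ0 hφρ_int
  have hfin : fEnergy R Ψ g β ρ =
      ((R (∫ θ, (∫ r, ρ (θ, r)) • Ψ θ) + (∫ θ, g θ * ∫ r, ρ (θ, r))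
        + (∫ p, (‖p.2‖ ^ 2 / 2) * ρ p) + β⁻¹ * ∫ p, ρ p * Real.log (ρ p) : ℝ) : EReal) := by
    unfold fEnergy
    rw [aux_ereal_fin hEnt.1 hEnt.2.1]
    congr 1
    linear_combination β⁻¹ * hEnt.2.2
  -- pointwise comparison with ρs
  have hcmp : (fun p : EuclideanSpace ℝ (Fin d) × EuclideanSpace ℝ (Fin d) =>
      ρ p - ρs p) ≤ᶠ[ae volume]
      fun p => ρ p * Real.log (ρ p) - ρ p * Real.log (ρs p) := by
    filter_upwards [hlogρs] with p hp
    exact aux_log_cmp (hρ0 p) hp.2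
  have hexplρ : (fun p => ρ p * Real.log (ρs p)) =ᶠ[ae volume]
      (fun p : EuclideanSpace ℝ (Fin d) × EuclideanSpace ℝ (Fin d) =>
        (-β) * ((‖p.2‖ ^ 2 / 2) * ρ p) + (-Real.log Z₁ - Real.log Z₂) * ρ p
        + (-β) * (h₀ p.1 * ρ p) + (-β) * (g p.1 * ρ p)) := by
    filter_upwards [hlogρs] with p hp
    rw [hp.1]; ring
  have iABC : Integrable (fun p : EuclideanSpace ℝ (Fin d) × EuclideanSpace ℝ (Fin d) =>
      (-β) * ((‖p.2‖ ^ 2 / 2) * ρ p) + (-Real.log Z₁ - Real.log Z₂) * ρ p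
        + (-β) * (h₀ p.1 * ρ p)) :=
    ((ik.const_mul (-β)).add (hρint.const_mul (-Real.log Z₁ - Real.log Z₂))).add
      (ih₀ρ.const_mul (-β))
  have iAB : Integrable (fun p : EuclideanSpace ℝ (Fin d) × EuclideanSpace ℝ (Fin d) =>
      (-β) * ((‖p.2‖ ^ 2 / 2) * ρ p) + (-Real.log Z₁ - Real.log Z₂) * ρ p) :=
    (ik.const_mul (-β)).add (hρint.const_mul (-Real.log Z₁ - Real.log Z₂))
  have iρlogρs : Integrable fun p => ρ p * Real.log (ρs p) :=
    Integrable.congr (iABC.add (igρ.const_mul (-β))) hexplρ.symm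
  have hval : (∫ p, ρ p * Real.log (ρs p)) =
      (-β) * (∫ p, (‖p.2‖ ^ 2 / 2) * ρ p) + (-Real.log Z₁ - Real.log Z₂)
        + (-β) * (∫ p, h₀ p.1 * ρ p) + (-β) * (∫ p, g p.1 * ρ p) := by
    rw [integral_congr_ae hexplρ,
      integral_add iABC (igρ.const_mul (-β)),
      integral_add iAB (ih₀ρ.const_mul (-β)),
      integral_add (ik.const_mul (-β)) (hρint.const_mul (-Real.log Z₁ - Real.log Z₂)),
      integral_const_mul, integral_const_mul, integral_const_mul, integral_const_mul, hρ1]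
    ring
  have hmono : (∫ p, ρ p - ρs p) ≤
      ∫ p, ρ p * Real.log (ρ p) - ρ p * Real.log (ρs p) :=
    integral_mono_ae (hρint.sub hρs_int) (hφρ_int.sub iρlogρs) hcmp
  have hsub1 : (∫ p, ρ p - ρs p) = 0 := by
    rw [integral_sub hρint hρs_int, hρ1, hρs1]; ring
  have hsub2 : (∫ p, ρ p * Real.log (ρ p) - ρ p * Real.log (ρs p)) =
      (∫ p, ρ p * Real.log (ρ p)) - ∫ p, ρ p * Real.log (ρs p) :=
    integral_sub hφρ_int iρlogρs
  have hlb : (∫ p, ρ p * Real.log (ρs p)) ≤ ∫ p, ρ p * Real.log (ρ p) := by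
    rw [hsub1] at hmono
    rw [hsub2] at hmono
    linarith
  -- Fubini conversions
  have hgF : (∫ p, g p.1 * ρ p) = ∫ θ, g θ * ∫ r, ρ (θ, r) := fubini_mul g ρ igρ
  have hh₀F : (∫ p, h₀ p.1 * ρ p) = ∫ θ, h₀ θ * ∫ r, ρ (θ, r) := fubini_mul h₀ ρ ih₀ρ
  -- inner product identities
  have hΨη : Integrable fun θ => ηs θ • Ψ θ := hA4int ηs hηint hη0 hη1.le
  have hinner_s : ⟪w, ∫ θ, ηs θ • Ψ θ⟫ = ∫ θ, h₀ θ * ηs θ := by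
    rw [← integral_inner hΨη w]
    simp_rw [real_inner_smul_right, mul_comm]
    rfl
  have hinner_a : ⟪w, ∫ θ, (∫ r, ρ (θ, r)) • Ψ θ⟫ = ∫ θ, h₀ θ * ∫ r, ρ (θ, r) := by
    rw [← integral_inner hΨρ w]
    simp_rw [real_inner_smul_right, mul_comm]
    rfl
  -- convexity
  have hconv := aux_convex_grad hRconv hgradR (∫ θ, ηs θ • Ψ θ)
    (∫ θ, (∫ r, ρ (θ, r)) • Ψ θ)
  rw [← hw, inner_sub_right] at hconv
  -- conclude
  rw [hfin_s, hfin]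
  apply EReal.coe_le_coe_iff.2
  have hβmul := mul_le_mul_of_nonneg_left hlb hβinv.le
  have key1 : β⁻¹ * (∫ p, ρ p * Real.log (ρs p)) =
      -(∫ p, (‖p.2‖ ^ 2 / 2) * ρ p) - β⁻¹ * Real.log Z₁ - β⁻¹ * Real.log Z₂
        - (∫ p, h₀ p.1 * ρ p) - (∫ p, g p.1 * ρ p) := by
    rw [hval]
    field_simp
    ring
  linarith [hβmul, hconv, key1, hgF, hh₀F, hinner_a, hinner_s]
end

section
/- Assume R : ℱ → [0,∞) is convex and Fréchet differentiable, Ψ and g are continuous, and let β > 0. Let K be the set of probability densities ρ on ℝ^d × ℝ^d with ∫∫(g(θ)+|r|²/2)ρ dθdr < ∞ and Ψ Bochner integrable with respect to [ρ]^θ(θ)dθ. Suppose ρ̄ ∈ K satisfies E(ρ̄) < ∞ and E(ρ̄) ≤ E(ρ) for every ρ ∈ K. Then ρ̄ > 0 almost everywhere, i.e., the set {(θ,r) : ρ̄(θ,r) = 0} has Lebesgue measure zero. (Any minimizer of the free energy over K is almost everywhere positive.) -/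
open MeasureTheory Real
open scoped RealInnerProductSpace ENNReal

lemma coe_ennreal_eq_toReal (x : ℝ≥0∞) (h : x ≠ ⊤) : (x : EReal) = ((x.toReal : ℝ) : EReal) := by
  rw [← ENNReal.ofReal_toReal h, EReal.coe_ennreal_ofReal, max_eq_left ENNReal.toReal_nonneg,
    ENNReal.toReal_ofReal ENNReal.toReal_nonneg]

lemma fEnergy_coe {d : ℕ} {F : Type*} [NormedAddCommGroup F]
    [InnerProductSpace ℝ F] [CompleteSpace F]
    (R : F → ℝ) (Ψ : EuclideanSpace ℝ (Fin d) → F) (g : EuclideanSpace ℝ (Fin d) → ℝ)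
    (β : ℝ) (ρ : EuclideanSpace ℝ (Fin d) × EuclideanSpace ℝ (Fin d) → ℝ)
    (hP : entP ρ ≠ ⊤) (hN : entN ρ ≠ ⊤) :
    fEnergy R Ψ g β ρ =
      (((R (∫ θ, (∫ r, ρ (θ, r)) • Ψ θ) + (∫ θ, g θ * ∫ r, ρ (θ, r))
        + ∫ p, (‖p.2‖ ^ 2 / 2) * ρ p) + β⁻¹ * (entP ρ).toReal
        - β⁻¹ * (entN ρ).toReal : ℝ) : EReal) := by
  unfold fEnergy
  rw [coe_ennreal_eq_toReal _ hP, coe_ennreal_eq_toReal _ hN]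
  norm_cast

lemma fEnergy_fin {d : ℕ} {F : Type*} [NormedAddCommGroup F]
    [InnerProductSpace ℝ F] [CompleteSpace F]
    (R : F → ℝ) (Ψ : EuclideanSpace ℝ (Fin d) → F) (g : EuclideanSpace ℝ (Fin d) → ℝ)
    (β : ℝ) (hβ : 0 < β) (ρ : EuclideanSpace ℝ (Fin d) × EuclideanSpace ℝ (Fin d) → ℝ)
    (h_top : fEnergy R Ψ g β ρ ≠ ⊤) (h_bot : fEnergy R Ψ g β ρ ≠ ⊥) :
    entP ρ ≠ ⊤ ∧ entN ρ ≠ ⊤ := by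
  have hc : (0:ℝ) < β⁻¹ := inv_pos.mpr hβ
  by_cases hP : entP ρ = ⊤ <;> by_cases hN : entN ρ = ⊤
  · exfalso
    apply h_bot
    unfold fEnergy
    rw [hP, hN, EReal.coe_ennreal_top, EReal.coe_mul_top_of_pos (by exact_mod_cast hc),
      EReal.coe_add_top, EReal.sub_top]
  · exfalso
    apply h_top
    unfold fEnergy
    rw [hP, EReal.coe_ennreal_top, EReal.coe_mul_top_of_pos (by exact_mod_cast hc),
      EReal.coe_add_top, coe_ennreal_eq_toReal _ hN]
    rw [show ((β⁻¹:ℝ) : EReal) * (((entN ρ).toReal : ℝ) : EReal)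
        = ((β⁻¹ * (entN ρ).toReal : ℝ) : EReal) by norm_cast]
    exact EReal.top_sub_coe _
  · exfalso
    apply h_bot
    unfold fEnergy
    rw [hN, EReal.coe_ennreal_top, EReal.coe_mul_top_of_pos (by exact_mod_cast hc),
      coe_ennreal_eq_toReal _ hP]
    rw [show (_ : EReal) + ((β⁻¹:ℝ) : EReal) * (((entP ρ).toReal : ℝ) : EReal)
        = ((_ + β⁻¹ * (entP ρ).toReal : ℝ) : EReal) by norm_cast]
    exact EReal.sub_top _
  · exact ⟨hP, hN⟩

lemma entPmax {d : ℕ} (ρ : EuclideanSpace ℝ (Fin d) × EuclideanSpace ℝ (Fin d) → ℝ)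
    (hρ : 0 ≤ ρ) :
    entP ρ = ∫⁻ p, ENNReal.ofReal (max (ρ p * Real.log (ρ p)) 0) := by
  unfold entP
  congr 1
  funext p
  rw [mul_max_of_nonneg _ _ (hρ p), mul_zero]

lemma entNmax {d : ℕ} (ρ : EuclideanSpace ℝ (Fin d) × EuclideanSpace ℝ (Fin d) → ℝ)
    (hρ : 0 ≤ ρ) :
    entN ρ = ∫⁻ p, ENNReal.ofReal (max (-(ρ p * Real.log (ρ p))) 0) := by
  unfold entN
  congr 1
  funext p
  rw [mul_max_of_nonneg _ _ (hρ p), mul_zero, mul_neg]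

lemma entKey {d : ℕ} (ρ : EuclideanSpace ℝ (Fin d) × EuclideanSpace ℝ (Fin d) → ℝ)
    (hmeas : Measurable ρ) (hρ : 0 ≤ ρ) (hP : entP ρ ≠ ⊤) (hN : entN ρ ≠ ⊤) :
    Integrable (fun p => ρ p * Real.log (ρ p)) ∧
    Integrable (fun p => max (-(ρ p * Real.log (ρ p))) 0) ∧
    (∫ p, ρ p * Real.log (ρ p)) = (entP ρ).toReal - (entN ρ).toReal ∧
    (∫ p, max (-(ρ p * Real.log (ρ p))) 0) = (entN ρ).toReal := by
  have hφm : Measurable (fun p : EuclideanSpace ℝ (Fin d) × EuclideanSpace ℝ (Fin d) =>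
      ρ p * Real.log (ρ p)) := hmeas.mul (Real.measurable_log.comp hmeas)
  have hfPm : Measurable (fun p : EuclideanSpace ℝ (Fin d) × EuclideanSpace ℝ (Fin d) =>
      max (ρ p * Real.log (ρ p)) 0) := hφm.max measurable_const
  have hfNm : Measurable (fun p : EuclideanSpace ℝ (Fin d) × EuclideanSpace ℝ (Fin d) =>
      max (-(ρ p * Real.log (ρ p))) 0) := hφm.neg.max measurable_const
  have hfPint : Integrable (fun p : EuclideanSpace ℝ (Fin d) × EuclideanSpace ℝ (Fin d) =>
      max (ρ p * Real.log (ρ p)) 0) := by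
    refine ⟨hfPm.aestronglyMeasurable, ?_⟩
    rw [hasFiniteIntegral_iff_ofReal
      (ae_of_all _ (fun p => le_max_right (ρ p * Real.log (ρ p)) 0))]
    rw [entPmax ρ hρ] at hP
    exact hP.lt_top
  have hfNint : Integrable (fun p : EuclideanSpace ℝ (Fin d) × EuclideanSpace ℝ (Fin d) =>
      max (-(ρ p * Real.log (ρ p))) 0) := by
    refine ⟨hfNm.aestronglyMeasurable, ?_⟩
    rw [hasFiniteIntegral_iff_ofReal
      (ae_of_all _ (fun p => le_max_right (-(ρ p * Real.log (ρ p))) 0))]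
    rw [entNmax ρ hρ] at hN
    exact hN.lt_top
  have hsub : (fun p : EuclideanSpace ℝ (Fin d) × EuclideanSpace ℝ (Fin d) =>
      max (ρ p * Real.log (ρ p)) 0 - max (-(ρ p * Real.log (ρ p))) 0)
      = fun p => ρ p * Real.log (ρ p) := by
    funext p
    rcases le_total (ρ p * Real.log (ρ p)) 0 with h | h
    · rw [max_eq_right h, max_eq_left (by linarith)]; ring
    · rw [max_eq_left h, max_eq_right (by linarith)]; ring
  have hφint : Integrable (fun p : EuclideanSpace ℝ (Fin d) × EuclideanSpace ℝ (Fin d) =>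
      ρ p * Real.log (ρ p)) := hsub ▸ (hfPint.sub hfNint)
  have h1 : (∫ p, max (ρ p * Real.log (ρ p)) 0) = (entP ρ).toReal := by
    rw [integral_eq_lintegral_of_nonneg_ae
      (ae_of_all _ (fun p => le_max_right (ρ p * Real.log (ρ p)) 0))
      hfPm.aestronglyMeasurable, ← entPmax ρ hρ]
  have h2 : (∫ p, max (-(ρ p * Real.log (ρ p))) 0) = (entN ρ).toReal := by
    rw [integral_eq_lintegral_of_nonneg_ae
      (ae_of_all _ (fun p => le_max_right (-(ρ p * Real.log (ρ p))) 0))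
      hfNm.aestronglyMeasurable, ← entNmax ρ hρ]
  refine ⟨hφint, hfNint, ?_, h2⟩
  rw [← hsub, integral_sub hfPint hfNint, h1, h2]

set_option maxHeartbeats 2000000 in
/-- positivity of free-energy minimizers: assume `R` is convex, Fréchet
differentiable and nonnegative, `Ψ` and `g` continuous, `β > 0`.  If `ρ̄` belongs to
the class `K` of probability densities on `ℝ^d × ℝ^d` with finite `g`- and kinetic
moments and `Ψ` integrable against the `θ`-marginal, `E(ρ̄)` is finite, and
`E(ρ̄) ≤ E(ρ)` for all `ρ ∈ K`, then `ρ̄ > 0` almost everywhere, i.e. the zero set of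
`ρ̄` is Lebesgue-null. -/
theorem stmt_14 {d : ℕ} {F : Type*} [NormedAddCommGroup F] [InnerProductSpace ℝ F]
    [CompleteSpace F]
    (R : F → ℝ) (hR0 : ∀ ψ, 0 ≤ R ψ) (hRconv : ConvexOn ℝ Set.univ R)
    (hRdiff : Differentiable ℝ R)
    (Ψ : EuclideanSpace ℝ (Fin d) → F) (hΨcont : Continuous Ψ)
    (g : EuclideanSpace ℝ (Fin d) → ℝ) (hg0 : ∀ θ, 0 ≤ g θ) (hgcont : Continuous g)
    (β : ℝ) (hβ : 0 < β)
    (ρb : EuclideanSpace ℝ (Fin d) × EuclideanSpace ℝ (Fin d) → ℝ)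
    (hρbmeas : Measurable ρb) (hρb0 : 0 ≤ ρb) (hρbint : Integrable ρb)
    (hρb1 : (∫ p, ρb p) = 1)
    (hρbmom : Integrable fun p : EuclideanSpace ℝ (Fin d) × EuclideanSpace ℝ (Fin d) =>
      (g p.1 + ‖p.2‖ ^ 2 / 2) * ρb p)
    (hρbΨ : Integrable fun θ => (∫ r, ρb (θ, r)) • Ψ θ)
    (hfin_top : fEnergy R Ψ g β ρb ≠ ⊤) (hfin_bot : fEnergy R Ψ g β ρb ≠ ⊥)
    (hmin : ∀ ρ : EuclideanSpace ℝ (Fin d) × EuclideanSpace ℝ (Fin d) → ℝ,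
      Measurable ρ → 0 ≤ ρ → Integrable ρ → (∫ p, ρ p) = 1 →
      (Integrable fun p : EuclideanSpace ℝ (Fin d) × EuclideanSpace ℝ (Fin d) =>
        (g p.1 + ‖p.2‖ ^ 2 / 2) * ρ p) →
      (Integrable fun θ => (∫ r, ρ (θ, r)) • Ψ θ) →
      fEnergy R Ψ g β ρb ≤ fEnergy R Ψ g β ρ) :
    volume {p : EuclideanSpace ℝ (Fin d) × EuclideanSpace ℝ (Fin d) | ρb p = 0} = 0 := by
  classical
  by_contra hZ
  set Z : Set (EuclideanSpace ℝ (Fin d) × EuclideanSpace ℝ (Fin d)) := {p | ρb p = 0} with hZdef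
  have hZmeas : MeasurableSet Z := hρbmeas (measurableSet_singleton 0)
  -- find a bounded piece of positive measure inside the zero set
  obtain ⟨n, hn⟩ : ∃ n : ℕ,
      volume (Z ∩ (Metric.ball (0:EuclideanSpace ℝ (Fin d)) n ×ˢ Metric.ball (0:EuclideanSpace ℝ (Fin d)) n)) ≠ 0 := by
    by_contra h
    push_neg at h
    apply hZ
    have hcover : Z = ⋃ n : ℕ, Z ∩ (Metric.ball (0:EuclideanSpace ℝ (Fin d)) n ×ˢ Metric.ball (0:EuclideanSpace ℝ (Fin d)) n) := by
      ext p
      simp only [Set.mem_iUnion, Set.mem_inter_iff, Set.mem_prod, Metric.mem_ball,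
        dist_zero_right]
      constructor
      · intro hp
        obtain ⟨n, hn⟩ := exists_nat_gt (max ‖p.1‖ ‖p.2‖)
        exact ⟨n, hp, lt_of_le_of_lt (le_max_left _ _) hn, lt_of_le_of_lt (le_max_right _ _) hn⟩
      · rintro ⟨n, hp, -⟩; exact hp
    show volume Z = 0
    rw [hcover]
    exact measure_iUnion_null h
  set B : Set (EuclideanSpace ℝ (Fin d) × EuclideanSpace ℝ (Fin d)) := Metric.ball (0:EuclideanSpace ℝ (Fin d)) n ×ˢ Metric.ball (0:EuclideanSpace ℝ (Fin d)) n with hBdef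
  have hBmeas : MeasurableSet B := measurableSet_ball.prod measurableSet_ball
  set W : Set (EuclideanSpace ℝ (Fin d) × EuclideanSpace ℝ (Fin d)) := Z ∩ B with hWdef
  have hWmeas : MeasurableSet W := hZmeas.inter hBmeas
  have hWtop : volume W ≠ ⊤ := by
    refine ne_top_of_le_ne_top ?_ (measure_mono Set.inter_subset_right)
    rw [hBdef, MeasureTheory.Measure.volume_eq_prod, MeasureTheory.Measure.prod_prod]
    exact (ENNReal.mul_lt_top measure_ball_lt_top measure_ball_lt_top).ne
  set m : ℝ := (volume W).toReal with hmdef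
  have hm : 0 < m := ENNReal.toReal_pos hn hWtop
  -- the bump ν
  set ν : EuclideanSpace ℝ (Fin d) × EuclideanSpace ℝ (Fin d) → ℝ := W.indicator (fun _ => m⁻¹) with hνdef
  have hνmeas : Measurable ν := measurable_const.indicator hWmeas
  have hν0 : 0 ≤ ν := fun p => Set.indicator_nonneg (fun _ _ => by positivity) p
  have hνint : Integrable ν := by
    rw [hνdef, integrable_indicator_iff hWmeas]
    exact integrableOn_const hWtop
  have hνint1 : (∫ p, ν p) = 1 := by
    rw [hνdef, integral_indicator_const _ hWmeas, smul_eq_mul, measureReal_def, ← hmdef,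
      mul_inv_cancel₀ hm.ne']
  -- sections of ν
  have hνsec : ∀ θ : EuclideanSpace ℝ (Fin d), (fun r => ν (θ, r)) =
      (Prod.mk θ ⁻¹' W).indicator (fun _ => m⁻¹) := by
    intro θ; funext r
    by_cases hp : (θ, r) ∈ W
    · rw [hνdef, Set.indicator_of_mem hp,
        Set.indicator_of_mem (show r ∈ Prod.mk θ ⁻¹' W from hp)]
    · rw [hνdef, Set.indicator_of_notMem hp,
        Set.indicator_of_notMem (show r ∉ Prod.mk θ ⁻¹' W from hp)]
  have hνsecmeas : ∀ θ : EuclideanSpace ℝ (Fin d), MeasurableSet (Prod.mk θ ⁻¹' W) :=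
    fun θ => measurable_prodMk_left hWmeas
  have hνsecsub : ∀ θ : EuclideanSpace ℝ (Fin d), (Prod.mk θ ⁻¹' W) ⊆ Metric.ball (0:EuclideanSpace ℝ (Fin d)) n := by
    intro θ r hr
    exact hr.2.2
  have hνfib : ∀ θ : EuclideanSpace ℝ (Fin d), Integrable (fun r => ν (θ, r)) := by
    intro θ
    rw [hνsec θ, integrable_indicator_iff (hνsecmeas θ)]
    refine integrableOn_const (LT.lt.ne ?_)
    exact lt_of_le_of_lt (measure_mono (hνsecsub θ)) measure_ball_lt_top
  set vb : ℝ := (volume (Metric.ball (0:EuclideanSpace ℝ (Fin d)) n)).toReal with hvbdef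
  have hvb0 : 0 ≤ vb := ENNReal.toReal_nonneg
  set mν : EuclideanSpace ℝ (Fin d) → ℝ := fun θ => ∫ r, ν (θ, r) with hmνdef
  have hmν_eq : ∀ θ, mν θ = (volume (Prod.mk θ ⁻¹' W)).toReal * m⁻¹ := by
    intro θ
    rw [hmνdef]
    simp only
    rw [hνsec θ, integral_indicator_const _ (hνsecmeas θ), smul_eq_mul, measureReal_def]
  have hmν0 : ∀ θ, 0 ≤ mν θ := by
    intro θ; rw [hmν_eq]; positivity
  have hmν_bd : ∀ θ, mν θ ≤ vb * m⁻¹ := by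
    intro θ
    rw [hmν_eq]
    gcongr
    exact ENNReal.toReal_mono measure_ball_lt_top.ne (measure_mono (hνsecsub θ))
  have hmν_supp : ∀ θ : EuclideanSpace ℝ (Fin d), θ ∉ Metric.ball (0:EuclideanSpace ℝ (Fin d)) n → mν θ = 0 := by
    intro θ hθ
    rw [hmν_eq]
    have : (Prod.mk θ ⁻¹' W) = ∅ := by
      ext r; simp only [Set.mem_preimage, Set.mem_empty_iff_false, iff_false]
      intro hr; exact hθ hr.2.1
    rw [this]
    simp
  have hmν_meas : StronglyMeasurable mν := by
    rw [hmνdef]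
    exact hνmeas.stronglyMeasurable.integral_prod_right'
      (ν := (volume : Measure (EuclideanSpace ℝ (Fin d))))
  -- bounds for Ψ and g on the ball
  obtain ⟨CΨ, hCΨ⟩ : ∃ C, ∀ θ ∈ Metric.closedBall (0:EuclideanSpace ℝ (Fin d)) n, ‖Ψ θ‖ ≤ C :=
    (isCompact_closedBall _ _).exists_bound_of_continuousOn hΨcont.continuousOn
  have hCΨ0 : 0 ≤ CΨ :=
    le_trans (norm_nonneg _) (hCΨ 0 (Metric.mem_closedBall_self (by positivity)))
  obtain ⟨Cg, hCg⟩ : ∃ C, ∀ θ ∈ Metric.closedBall (0:EuclideanSpace ℝ (Fin d)) n, ‖g θ‖ ≤ C :=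
    (isCompact_closedBall _ _).exists_bound_of_continuousOn hgcont.continuousOn
  have hCg0 : 0 ≤ Cg :=
    le_trans (norm_nonneg _) (hCg 0 (Metric.mem_closedBall_self (by positivity)))
  have hballint : ∀ C : ℝ, Integrable ((Metric.ball (0:EuclideanSpace ℝ (Fin d)) n).indicator (fun _ => C)) := by
    intro C
    rw [integrable_indicator_iff measurableSet_ball]
    exact integrableOn_const measure_ball_lt_top.ne
  -- integrability of ν-pieces
  have hUint : Integrable (fun θ => mν θ • Ψ θ) := by
    refine Integrable.mono' (hballint (vb * m⁻¹ * CΨ))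
      (hmν_meas.aestronglyMeasurable.smul hΨcont.aestronglyMeasurable) (ae_of_all _ ?_)
    intro θ
    by_cases hθ : θ ∈ Metric.ball (0:EuclideanSpace ℝ (Fin d)) n
    · rw [Set.indicator_of_mem hθ, norm_smul, norm_of_nonneg (hmν0 θ)]
      exact mul_le_mul (hmν_bd θ) (hCΨ θ (Metric.ball_subset_closedBall hθ)) (norm_nonneg _)
        (by positivity)
    · rw [Set.indicator_of_notMem hθ, hmν_supp θ hθ, zero_smul, norm_zero]
  have hGνint : Integrable (fun θ => g θ * mν θ) := by
    refine Integrable.mono' (hballint (Cg * (vb * m⁻¹)))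
      ((hgcont.aestronglyMeasurable).mul hmν_meas.aestronglyMeasurable) (ae_of_all _ ?_)
    intro θ
    by_cases hθ : θ ∈ Metric.ball (0:EuclideanSpace ℝ (Fin d)) n
    · rw [Set.indicator_of_mem hθ, norm_mul, norm_of_nonneg (hmν0 θ)]
      exact mul_le_mul (hCg θ (Metric.ball_subset_closedBall hθ)) (hmν_bd θ) (hmν0 θ) hCg0
    · rw [Set.indicator_of_notMem hθ, hmν_supp θ hθ, mul_zero, norm_zero]
  have hBindint : ∀ C : ℝ, Integrable (B.indicator (fun _ => C)) := by
    intro C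
    rw [integrable_indicator_iff hBmeas]
    refine integrableOn_const (LT.lt.ne ?_)
    rw [hBdef, MeasureTheory.Measure.volume_eq_prod, MeasureTheory.Measure.prod_prod]
    exact ENNReal.mul_lt_top measure_ball_lt_top measure_ball_lt_top
  have hν_vanish : ∀ p : EuclideanSpace ℝ (Fin d) × EuclideanSpace ℝ (Fin d), p ∉ B → ν p = 0 := by
    intro p hp
    rw [hνdef, Set.indicator_of_notMem (fun hw => hp hw.2)]
  have hν_le : ∀ p, ν p ≤ m⁻¹ := by
    intro p
    rw [hνdef]
    by_cases hp : p ∈ W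
    · rw [Set.indicator_of_mem hp]
    · rw [Set.indicator_of_notMem hp]; positivity
  have hKνint : Integrable (fun p : EuclideanSpace ℝ (Fin d) × EuclideanSpace ℝ (Fin d) => (‖p.2‖ ^ 2 / 2) * ν p) := by
    refine Integrable.mono' (hBindint ((n ^ 2 / 2) * m⁻¹))
      (((measurable_snd.norm.pow measurable_const).div_const 2).aestronglyMeasurable.mul
        hνmeas.aestronglyMeasurable) (ae_of_all _ ?_)
    intro p
    by_cases hp : p ∈ B
    · rw [Set.indicator_of_mem hp, norm_mul, norm_of_nonneg (hν0 p),
        norm_of_nonneg (by positivity : (0:ℝ) ≤ ‖p.2‖ ^ 2 / 2)]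
      have h2 : ‖p.2‖ < n := by simpa [dist_zero_right] using hp.2
      exact mul_le_mul (by nlinarith [norm_nonneg p.2]) (hν_le p) (hν0 p) (by positivity)
    · rw [Set.indicator_of_notMem hp, hν_vanish p hp, mul_zero, norm_zero]
  have hmomνint : Integrable (fun p : EuclideanSpace ℝ (Fin d) × EuclideanSpace ℝ (Fin d) => (g p.1 + ‖p.2‖ ^ 2 / 2) * ν p) := by
    refine Integrable.mono' (hBindint ((Cg + n ^ 2 / 2) * m⁻¹))
      (((hgcont.comp continuous_fst).aestronglyMeasurable.add
        ((measurable_snd.norm.pow measurable_const).div_const 2).aestronglyMeasurable).mul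
        hνmeas.aestronglyMeasurable) (ae_of_all _ ?_)
    intro p
    by_cases hp : p ∈ B
    · rw [Set.indicator_of_mem hp, norm_mul, norm_of_nonneg (hν0 p)]
      have h2 : ‖p.2‖ < n := by simpa [dist_zero_right] using hp.2
      have h1 : ‖g p.1‖ ≤ Cg := hCg p.1 (Metric.ball_subset_closedBall hp.1)
      have hgb : g p.1 + ‖p.2‖ ^ 2 / 2 ≤ Cg + n ^ 2 / 2 := by
        have := (abs_le.mp h1).2
        nlinarith [norm_nonneg p.2]
      rw [norm_of_nonneg (add_nonneg (hg0 p.1) (by positivity : (0:ℝ) ≤ ‖p.2‖ ^ 2 / 2))]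
      exact mul_le_mul hgb (hν_le p) (hν0 p) (by positivity)
    · rw [Set.indicator_of_notMem hp, hν_vanish p hp, mul_zero, norm_zero]
  -- marginal integrabilities for ρb
  have hρbfib : ∀ᵐ θ : EuclideanSpace ℝ (Fin d), Integrable (fun r => ρb (θ, r)) := by
    rw [MeasureTheory.Measure.volume_eq_prod] at hρbint
    exact hρbint.prod_right_ae
  have hgρint : Integrable (fun p : EuclideanSpace ℝ (Fin d) × EuclideanSpace ℝ (Fin d) => g p.1 * ρb p) := by
    refine Integrable.mono' hρbmom
      ((hgcont.comp continuous_fst).aestronglyMeasurable.mul hρbmeas.aestronglyMeasurable)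
      (ae_of_all _ ?_)
    intro p
    rw [norm_mul, norm_of_nonneg (hg0 p.1), norm_of_nonneg (hρb0 p)]
    nlinarith [mul_nonneg (by positivity : (0:ℝ) ≤ ‖p.2‖ ^ 2 / 2) (hρb0 p)]
  have hkρint : Integrable (fun p : EuclideanSpace ℝ (Fin d) × EuclideanSpace ℝ (Fin d) => (‖p.2‖ ^ 2 / 2) * ρb p) := by
    refine Integrable.mono' hρbmom
      (((measurable_snd.norm.pow measurable_const).div_const 2).aestronglyMeasurable.mul
        hρbmeas.aestronglyMeasurable) (ae_of_all _ ?_)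
    intro p
    rw [norm_mul, norm_of_nonneg (hρb0 p),
      norm_of_nonneg (by positivity : (0:ℝ) ≤ ‖p.2‖ ^ 2 / 2)]
    nlinarith [mul_nonneg (hg0 p.1) (hρb0 p)]
  have hGbint : Integrable (fun θ : EuclideanSpace ℝ (Fin d) => g θ * ∫ r, ρb (θ, r)) := by
    have h1 : Integrable (fun θ : EuclideanSpace ℝ (Fin d) => ∫ r, g θ * ρb (θ, r)) := by
      rw [MeasureTheory.Measure.volume_eq_prod] at hgρint
      exact hgρint.integral_prod_left
    refine h1.congr (ae_of_all _ ?_)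
    intro θ
    simp only
    rw [integral_const_mul]
  -- entropy of the minimizer is finite
  obtain ⟨hPfin, hNfin⟩ := fEnergy_fin R Ψ g β hβ ρb hfin_top hfin_bot
  obtain ⟨hφbint, hfNbint, h_intφb, h_intfNb⟩ := entKey ρb hρbmeas hρb0 hPfin hNfin
  -- constants
  set C0 : ℝ := R (∫ θ, mν θ • Ψ θ) + (∫ θ, g θ * mν θ)
    - (∫ θ, g θ * ∫ r, ρb (θ, r))
    + (∫ p : EuclideanSpace ℝ (Fin d) × EuclideanSpace ℝ (Fin d), (‖p.2‖ ^ 2 / 2) * ν p)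
    - (∫ p : EuclideanSpace ℝ (Fin d) × EuclideanSpace ℝ (Fin d), (‖p.2‖ ^ 2 / 2) * ρb p)
    + β⁻¹ * ((entN ρb).toReal - Real.log m) with hC0def
  set t : ℝ := min (1 / 2) (Real.exp (-β * (C0 + 1))) with htdef
  have ht0 : 0 < t := lt_min (by norm_num) (Real.exp_pos _)
  have ht2 : t ≤ 1 / 2 := min_le_left _ _
  have h1t : 0 < 1 - t := by linarith
  have hβi : (0:ℝ) < β⁻¹ := inv_pos.mpr hβ
  -- the competitor
  set ρt : EuclideanSpace ℝ (Fin d) × EuclideanSpace ℝ (Fin d) → ℝ := fun p => (1 - t) * ρb p + t * ν p with hρtdef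
  have hρtmeas : Measurable ρt := (hρbmeas.const_mul _).add (hνmeas.const_mul _)
  have hρt0 : 0 ≤ ρt :=
    fun p => add_nonneg (mul_nonneg h1t.le (hρb0 p)) (mul_nonneg ht0.le (hν0 p))
  have hρtint : Integrable ρt := ((hρbint.const_mul _).add (hνint.const_mul _))
  have hρt1 : (∫ p, ρt p) = 1 := by
    simp only [hρtdef]
    rw [integral_add (hρbint.const_mul _) (hνint.const_mul _), integral_const_mul,
      integral_const_mul, hρb1, hνint1]
    ring
  have hρtmom : Integrable fun p : EuclideanSpace ℝ (Fin d) × EuclideanSpace ℝ (Fin d) => (g p.1 + ‖p.2‖ ^ 2 / 2) * ρt p := by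
    refine ((hρbmom.const_mul (1 - t)).add (hmomνint.const_mul t)).congr
      (ae_of_all _ ?_)
    intro p
    simp only [Pi.add_apply, hρtdef]
    ring
  -- fibers of ρt
  have hmargt : ∀ᵐ θ : EuclideanSpace ℝ (Fin d), (∫ r, ρt (θ, r)) = (1 - t) * (∫ r, ρb (θ, r)) + t * mν θ := by
    filter_upwards [hρbfib] with θ hθ
    rw [hρtdef]
    simp only
    rw [integral_add (hθ.const_mul _) ((hνfib θ).const_mul _), integral_const_mul,
      integral_const_mul]
  have hae1 : (fun θ => (∫ r, ρt (θ, r)) • Ψ θ)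
      =ᵐ[volume] fun θ => (1 - t) • ((∫ r, ρb (θ, r)) • Ψ θ) + t • (mν θ • Ψ θ) := by
    filter_upwards [hmargt] with θ hθ
    rw [hθ, add_smul, mul_smul, mul_smul]
  have hsm1 : Integrable (fun θ => (1 - t) • ((∫ r, ρb (θ, r)) • Ψ θ)) :=
    hρbΨ.smul ((1:ℝ) - t)
  have hsm2 : Integrable (fun θ => t • (mν θ • Ψ θ)) := hUint.smul t
  have hρtΨ : Integrable fun θ => (∫ r, ρt (θ, r)) • Ψ θ :=
    ((hsm1.add hsm2).congr hae1.symm)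
  -- the three linear identities
  have hVt : (∫ θ, (∫ r, ρt (θ, r)) • Ψ θ)
      = (1 - t) • (∫ θ, (∫ r, ρb (θ, r)) • Ψ θ) + t • (∫ θ, mν θ • Ψ θ) := by
    rw [integral_congr_ae hae1,
      integral_add hsm1 hsm2, integral_smul, integral_smul]
  have hGt : (∫ θ, g θ * ∫ r, ρt (θ, r))
      = (1 - t) * (∫ θ, g θ * ∫ r, ρb (θ, r)) + t * (∫ θ, g θ * mν θ) := by
    have hae2 : (fun θ => g θ * ∫ r, ρt (θ, r))
        =ᵐ[volume] fun θ => (1 - t) * (g θ * ∫ r, ρb (θ, r)) + t * (g θ * mν θ) := by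
      filter_upwards [hmargt] with θ hθ
      rw [hθ]
      ring
    rw [integral_congr_ae hae2,
      integral_add (hGbint.const_mul _) (hGνint.const_mul _), integral_const_mul,
      integral_const_mul]
  have hKt : (∫ p : EuclideanSpace ℝ (Fin d) × EuclideanSpace ℝ (Fin d), (‖p.2‖ ^ 2 / 2) * ρt p)
      = (1 - t) * (∫ p : EuclideanSpace ℝ (Fin d) × EuclideanSpace ℝ (Fin d), (‖p.2‖ ^ 2 / 2) * ρb p)
        + t * (∫ p : EuclideanSpace ℝ (Fin d) × EuclideanSpace ℝ (Fin d), (‖p.2‖ ^ 2 / 2) * ν p) := by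
    have hae3 : (fun p : EuclideanSpace ℝ (Fin d) × EuclideanSpace ℝ (Fin d) => (‖p.2‖ ^ 2 / 2) * ρt p)
        = fun p => (1 - t) * ((‖p.2‖ ^ 2 / 2) * ρb p) + t * ((‖p.2‖ ^ 2 / 2) * ν p) := by
      funext p
      simp only [hρtdef]
      ring
    rw [hae3, integral_add (hkρint.const_mul _) (hKνint.const_mul _), integral_const_mul,
      integral_const_mul]
  -- pointwise values of ρt
  set κ : ℝ := t * m⁻¹ with hκdef
  have hκ0 : 0 < κ := by positivity
  have hρtW : ∀ p ∈ W, ρt p = κ := by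
    intro p hp
    simp only [hρtdef]
    rw [show ρb p = 0 from hp.1, hνdef, Set.indicator_of_mem hp]
    ring
  have hρtnW : ∀ (p : EuclideanSpace ℝ (Fin d) × EuclideanSpace ℝ (Fin d)), p ∉ W → ρt p = (1 - t) * ρb p := by
    intro p hp
    simp only [hρtdef]
    rw [hνdef, Set.indicator_of_notMem hp]
    ring
  have hl1 : Real.log (1 - t) ≤ 0 := Real.log_nonpos (by linarith) (by linarith)
  -- pointwise entropy bounds
  have hub : ∀ p, ρt p * Real.log (ρt p) ≤ ρb p * Real.log (ρb p)
      + t * max (-(ρb p * Real.log (ρb p))) 0 + W.indicator (fun _ => κ * Real.log κ) p := by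
    intro p
    by_cases hp : p ∈ W
    · rw [hρtW p hp, Set.indicator_of_mem hp, show ρb p = 0 from hp.1]
      simp
    · rw [hρtnW p hp, Set.indicator_of_notMem hp]
      have hx : 0 ≤ ρb p := hρb0 p
      rcases eq_or_lt_of_le hx with hx0 | hx0
      · rw [← hx0]
        simp
      · rw [Real.log_mul h1t.ne' hx0.ne']
        rcases le_or_gt 0 (ρb p * Real.log (ρb p)) with hφ | hφ
        · rw [max_eq_right (by linarith)]
          nlinarith [mul_nonneg (mul_nonneg h1t.le hx) (neg_nonneg.mpr hl1)]
        · rw [max_eq_left (by linarith)]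
          nlinarith [mul_nonneg (mul_nonneg h1t.le hx) (neg_nonneg.mpr hl1)]
  have hlb : ∀ p, -(max (-(ρb p * Real.log (ρb p))) 0) - |Real.log (1 - t)| * ρb p
      - W.indicator (fun _ => |κ * Real.log κ|) p ≤ ρt p * Real.log (ρt p) := by
    intro p
    by_cases hp : p ∈ W
    · rw [hρtW p hp, Set.indicator_of_mem hp, show ρb p = 0 from hp.1]
      simp only [Real.log_zero, mul_zero, zero_mul, neg_zero, max_self, zero_sub]
      have := neg_abs_le (κ * Real.log κ)
      linarith
    · rw [hρtnW p hp, Set.indicator_of_notMem hp]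
      have hx : 0 ≤ ρb p := hρb0 p
      have habs : |Real.log (1 - t)| = -Real.log (1 - t) := abs_of_nonpos hl1
      rcases eq_or_lt_of_le hx with hx0 | hx0
      · rw [← hx0]
        simp
      · rw [Real.log_mul h1t.ne' hx0.ne', habs]
        rcases le_or_gt 0 (ρb p * Real.log (ρb p)) with hφ | hφ
        · rw [max_eq_right (by linarith)]
          nlinarith [mul_nonneg (mul_nonneg ht0.le hx) (neg_nonneg.mpr hl1)]
        · rw [max_eq_left (by linarith)]
          nlinarith [mul_nonneg (mul_nonneg ht0.le hx) (neg_nonneg.mpr hl1)]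
  -- integrability of the bounds
  have hWindint : ∀ c : ℝ, Integrable (W.indicator (fun _ => c)) := by
    intro c
    rw [integrable_indicator_iff hWmeas]
    exact integrableOn_const hWtop
  have hubint : Integrable (fun p => ρb p * Real.log (ρb p)
      + t * max (-(ρb p * Real.log (ρb p))) 0
      + W.indicator (fun _ => κ * Real.log κ) p) :=
    (hφbint.add (hfNbint.const_mul t)).add (hWindint _)
  have hlbint : Integrable (fun p => -(max (-(ρb p * Real.log (ρb p))) 0)
      - |Real.log (1 - t)| * ρb p - W.indicator (fun _ => |κ * Real.log κ|) p) :=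
    ((hfNbint.neg).sub (hρbint.const_mul _)).sub (hWindint _)
  have hfinlint : ∀ h : EuclideanSpace ℝ (Fin d) × EuclideanSpace ℝ (Fin d) → ℝ, Integrable h →
      (∫⁻ p, ENNReal.ofReal |h p|) < ⊤ := by
    intro h hh
    rw [← hasFiniteIntegral_iff_ofReal (ae_of_all _ (fun p => abs_nonneg (h p)))]
    exact hh.abs.2
  -- entropy of ρt is finite
  have hPt : entP ρt ≠ ⊤ := by
    rw [entPmax ρt hρt0]
    refine ne_of_lt (lt_of_le_of_lt (lintegral_mono fun p => ENNReal.ofReal_le_ofReal ?_)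
      (hfinlint _ hubint))
    exact max_le (le_trans (hub p) (le_abs_self _)) (abs_nonneg _)
  have hNt : entN ρt ≠ ⊤ := by
    rw [entNmax ρt hρt0]
    refine ne_of_lt (lt_of_le_of_lt (lintegral_mono fun p => ENNReal.ofReal_le_ofReal ?_)
      (hfinlint _ hlbint))
    exact max_le (le_trans (neg_le_neg (hlb p)) (neg_le_abs _)) (abs_nonneg _)
  obtain ⟨hφtint, -, h_intφt, -⟩ := entKey ρt hρtmeas hρt0 hPt hNt
  -- integral entropy bound
  have hEnt_le : (∫ p, ρt p * Real.log (ρt p))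
      ≤ (∫ p, ρb p * Real.log (ρb p)) + t * (entN ρb).toReal + t * Real.log κ := by
    have hI1 : Integrable (fun p => ρb p * Real.log (ρb p)
        + t * max (-(ρb p * Real.log (ρb p))) 0) := hφbint.add (hfNbint.const_mul t)
    have h1 : (∫ p, ρt p * Real.log (ρt p)) ≤ ∫ p, (ρb p * Real.log (ρb p)
        + t * max (-(ρb p * Real.log (ρb p))) 0
        + W.indicator (fun _ => κ * Real.log κ) p) :=
      integral_mono hφtint hubint hub
    rw [integral_add hI1 (hWindint _),
      integral_add hφbint (hfNbint.const_mul t), integral_const_mul, h_intfNb,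
      integral_indicator_const _ hWmeas, smul_eq_mul, measureReal_def, ← hmdef] at h1
    calc (∫ p, ρt p * Real.log (ρt p))
        ≤ (∫ p, ρb p * Real.log (ρb p)) + t * (entN ρb).toReal + m * (κ * Real.log κ) := by
          linarith
      _ = (∫ p, ρb p * Real.log (ρb p)) + t * (entN ρb).toReal + t * Real.log κ := by
          rw [hκdef, show m * (t * m⁻¹ * Real.log (t * m⁻¹)) =
            (m * m⁻¹) * (t * Real.log (t * m⁻¹)) by ring, mul_inv_cancel₀ hm.ne', one_mul]
  -- convexity of R
  have hRVt : R ((1 - t) • (∫ θ, (∫ r, ρb (θ, r)) • Ψ θ) + t • (∫ θ, mν θ • Ψ θ))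
      ≤ (1 - t) * R (∫ θ, (∫ r, ρb (θ, r)) • Ψ θ) + t * R (∫ θ, mν θ • Ψ θ) :=
    hRconv.2 (Set.mem_univ _) (Set.mem_univ _) h1t.le ht0.le (by ring)
  -- apply minimality
  have hle := hmin ρt hρtmeas hρt0 hρtint hρt1 hρtmom hρtΨ
  rw [fEnergy_coe R Ψ g β ρb hPfin hNfin, fEnergy_coe R Ψ g β ρt hPt hNt,
    EReal.coe_le_coe_iff] at hle
  rw [hVt, hGt, hKt] at hle
  -- fold entropy terms via the identities
  have hκlog : Real.log κ = Real.log t - Real.log m := by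
    rw [hκdef, Real.log_mul ht0.ne' (inv_ne_zero hm.ne'), Real.log_inv]
    ring
  have hmule : β⁻¹ * (entP ρt).toReal - β⁻¹ * (entN ρt).toReal
      ≤ β⁻¹ * (entP ρb).toReal - β⁻¹ * (entN ρb).toReal
        + β⁻¹ * (t * (entN ρb).toReal + t * (Real.log t - Real.log m)) := by
    have h2 : (entP ρt).toReal - (entN ρt).toReal ≤ (entP ρb).toReal - (entN ρb).toReal
        + (t * (entN ρb).toReal + t * (Real.log t - Real.log m)) := by
      rw [← h_intφt, ← h_intφb]
      rw [hκlog] at hEnt_le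
      linarith
    nlinarith [mul_le_mul_of_nonneg_left h2 hβi.le]
  -- deduce positivity of the linear coefficient
  have h0t : 0 ≤ C0 + β⁻¹ * Real.log t := by
    have hRV0 : 0 ≤ t * R (∫ θ, (∫ r, ρb (θ, r)) • Ψ θ) := mul_nonneg ht0.le (hR0 _)
    have hkey : 0 ≤ t * (C0 + β⁻¹ * Real.log t) := by
      rw [hC0def]
      nlinarith [hle, hRVt, hmule, hRV0]
    nlinarith [hkey, ht0]
  -- contradiction from the choice of t
  have hlogt : Real.log t ≤ -β * (C0 + 1) := by
    have h3 : Real.log t ≤ Real.log (Real.exp (-β * (C0 + 1))) := by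
      apply Real.log_le_log ht0
      rw [htdef]
      exact min_le_right _ _
    rwa [Real.log_exp] at h3
  have h4 : β⁻¹ * Real.log t ≤ β⁻¹ * (-β * (C0 + 1)) :=
    mul_le_mul_of_nonneg_left hlogt hβi.le
  rw [show β⁻¹ * (-β * (C0 + 1)) = -((β⁻¹ * β) * (C0 + 1)) by ring,
    inv_mul_cancel₀ hβ.ne'] at h4
  linarith
end
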